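/- arXiv:1509.02095 — 7 statements merged into one kernel-verified Lean document; each statement's English description precedes it below -/
import Mathlib

section
/- Let Ω ⊂ ℝⁿ be a bounded measurable set, D > 0, t > 0, and define u(x,t) = ∫_Ω (4πDt)^{-n/2} exp(−‖x−y‖²/(4Dt)) dy and N(t) = ∫_{ℝⁿ∖Ω} u(x,t) dx. Let μ̄(ℓ) = vol({ x ∈ Ω : infDist(x, frontier Ω) ≤ ℓ }) be the volume of the closed interior Minkowski sausage of ∂Ω of width ℓ. Then N(t) ≤ ∫_{ℝⁿ} π^{-n/2} e^{−‖v‖²} μ̄(2√(Dt)·‖v‖) dv (the de Gennes-type upper bound: the heat content is controlled by Gaussian averages of interior Minkowski sausage volumes). -/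
open MeasureTheory Set
open scoped ENNReal

/-- If `y ∈ Ω` and `y + z ∉ Ω`, the segment from `y` to `y + z` meets the frontier of `Ω`,
so the distance from `y` to the frontier is at most `‖z‖`. -/
lemma HeatContent.seg_frontier {E : Type*} [NormedAddCommGroup E] [NormedSpace ℝ E]
    (Ω : Set E) {y z : E} (hy : y ∈ Ω) (hz : y + z ∉ Ω) :
    Metric.infDist y (frontier Ω) ≤ ‖z‖ := by
  have hseg : IsPreconnected (segment ℝ y (y + z)) := (convex_segment _ _).isPreconnected
  have key : (segment ℝ y (y + z) ∩ frontier Ω).Nonempty := by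
    by_contra h
    rw [not_nonempty_iff_eq_empty] at h
    have hfr : ∀ w ∈ segment ℝ y (y + z), w ∉ frontier Ω := fun w hw hwf =>
      (eq_empty_iff_forall_notMem.mp h w) ⟨hw, hwf⟩
    have hsub : segment ℝ y (y + z) ⊆ interior Ω ∪ (closure Ω)ᶜ := by
      intro w hw
      by_cases hw1 : w ∈ closure Ω
      · by_cases hw2 : w ∈ interior Ω
        · exact Or.inl hw2
        · exact absurd (show w ∈ frontier Ω from ⟨hw1, hw2⟩) (hfr w hw)
      · exact Or.inr hw1
    have h1 : (segment ℝ y (y + z) ∩ interior Ω).Nonempty := by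
      refine ⟨y, left_mem_segment _ _ _, ?_⟩
      by_contra hy2
      exact hfr y (left_mem_segment _ _ _) ⟨subset_closure hy, hy2⟩
    have h2 : (segment ℝ y (y + z) ∩ (closure Ω)ᶜ).Nonempty := by
      refine ⟨y + z, right_mem_segment _ _ _, fun hc => ?_⟩
      exact hfr _ (right_mem_segment _ _ _) ⟨hc, fun h' => hz (interior_subset h')⟩
    obtain ⟨w, -, hwi, hwc⟩ := hseg _ _ isOpen_interior isClosed_closure.isOpen_compl hsub h1 h2
    exact hwc (subset_closure (interior_subset hwi))
  obtain ⟨w, hwseg, hwf⟩ := key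
  calc Metric.infDist y (frontier Ω) ≤ dist y w := Metric.infDist_le_dist_of_mem hwf
    _ ≤ ‖z‖ := by
        rw [segment_eq_image ℝ y (y + z)] at hwseg
        obtain ⟨r, ⟨hr0, hr1⟩, rfl⟩ := hwseg
        have : (1 - r) • y + r • (y + z) = y + r • z := by
          rw [smul_add]; module
        rw [show (fun θ => (1 - θ) • y + θ • (y + z)) r = y + r • z from this, dist_eq_norm,
          show y - (y + r • z) = -(r • z) by abel, norm_neg, norm_smul, Real.norm_eq_abs,
          abs_of_nonneg hr0]
        exact mul_le_of_le_one_left (norm_nonneg z) hr1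

/-- De Gennes-type upper bound: the heat content `N(t)` of a bounded measurable `Ω ⊂ ℝⁿ`
is bounded by the Gaussian average of volumes of interior Minkowski sausages of `∂Ω`. -/
theorem heat_content_le_gaussian_average_of_sausages
    {n : ℕ} (Ω : Set (EuclideanSpace ℝ (Fin n)))
    (hΩm : MeasurableSet Ω) (hΩb : Bornology.IsBounded Ω)
    (D t : ℝ) (hD : 0 < D) (ht : 0 < t) :
    (∫ x in Ωᶜ, ∫ y in Ω,
        (4 * Real.pi * D * t) ^ (-(n : ℝ) / 2) * Real.exp (-‖x - y‖ ^ 2 / (4 * D * t))) ≤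
    ∫ v : EuclideanSpace ℝ (Fin n),
        Real.pi ^ (-(n : ℝ) / 2) * Real.exp (-‖v‖ ^ 2) *
          (volume {x ∈ Ω |
            Metric.infDist x (frontier Ω) ≤ 2 * Real.sqrt (D * t) * ‖v‖}).toReal := by
  classical
  have hπ : (0:ℝ) < Real.pi := Real.pi_pos
  set a : ℝ := 2 * Real.sqrt (D * t) with ha_def
  have ha : 0 < a := by positivity
  have ha2 : a ^ 2 = 4 * D * t := by
    rw [ha_def, mul_pow, Real.sq_sqrt (by positivity)]; ring
  set c : ℝ := (4 * Real.pi * D * t) ^ (-(n : ℝ) / 2) with hc_def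
  have hc : 0 < c := Real.rpow_pos_of_pos (by positivity) _
  set F : EuclideanSpace ℝ (Fin n) → ℝ≥0∞ :=
    fun z => ENNReal.ofReal (c * Real.exp (-‖z‖ ^ 2 / (4 * D * t))) with hF_def
  have hFm : Measurable F := by
    apply Measurable.ennreal_ofReal; fun_prop
  have hFle : ∀ z, F z ≤ ENNReal.ofReal c := fun z =>
    ENNReal.ofReal_le_ofReal (mul_le_of_le_one_right hc.le
      (Real.exp_le_one_iff.2 (div_nonpos_of_nonpos_of_nonneg (neg_nonpos.2 (by positivity)) (by positivity))))
  set ms : ℝ → ℝ≥0∞ :=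
    fun ℓ => volume {x ∈ Ω | Metric.infDist x (frontier Ω) ≤ ℓ} with hms_def
  have hms_mono : Monotone ms := fun l1 l2 h =>
    measure_mono (fun x hx => ⟨hx.1, hx.2.trans h⟩)
  have hΩvol : volume Ω < ∞ := hΩb.measure_lt_top
  have hms_le : ∀ ℓ, ms ℓ ≤ volume Ω := fun ℓ => measure_mono (fun x hx => hx.1)
  have hmsm : Measurable ms := hms_mono.measurable
  have hmsv : Measurable (fun v : EuclideanSpace ℝ (Fin n) => ms (a * ‖v‖)) :=
    hmsm.comp (measurable_norm.const_mul a)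
  set L : ℝ≥0∞ := ∫⁻ x in Ωᶜ, ∫⁻ y in Ω, F (x - y) with hL_def
  set R : ℝ≥0∞ := ∫⁻ v : EuclideanSpace ℝ (Fin n),
      ENNReal.ofReal (Real.pi ^ (-(n : ℝ) / 2) * Real.exp (-‖v‖ ^ 2)) * ms (a * ‖v‖) with hR_def
  -- the inner lintegral is finite
  have hinner_ne : ∀ x, (∫⁻ y in Ω, F (x - y)) ≠ ∞ := by
    intro x
    have hb : (∫⁻ y in Ω, F (x - y)) ≤ ENNReal.ofReal c * volume Ω := by
      calc (∫⁻ y in Ω, F (x - y)) ≤ ∫⁻ _ in Ω, ENNReal.ofReal c :=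
            lintegral_mono fun y => hFle _
        _ = ENNReal.ofReal c * volume Ω := by rw [setLIntegral_const]
    exact ne_top_of_le_ne_top (ENNReal.mul_ne_top ENNReal.ofReal_ne_top hΩvol.ne) hb
  have hxm : Measurable fun x => ∫⁻ y in Ω, F (x - y) :=
    Measurable.lintegral_prod_right (hFm.comp (measurable_fst.sub measurable_snd))
  -- Step 1: the heat content equals `L.toReal`
  have step1 : (∫ x in Ωᶜ, ∫ y in Ω, c * Real.exp (-‖x - y‖ ^ 2 / (4 * D * t)))
      = L.toReal := by
    have h1 : ∀ x : EuclideanSpace ℝ (Fin n),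
        (∫ y in Ω, c * Real.exp (-‖x - y‖ ^ 2 / (4 * D * t)))
          = (∫⁻ y in Ω, F (x - y)).toReal := by
      intro x
      rw [integral_eq_lintegral_of_nonneg_ae
        (Filter.Eventually.of_forall fun y => by positivity)
        ((by fun_prop :
          Continuous fun y : EuclideanSpace ℝ (Fin n) =>
            c * Real.exp (-‖x - y‖ ^ 2 / (4 * D * t))).aestronglyMeasurable)]
    simp_rw [h1]
    rw [integral_eq_lintegral_of_nonneg_ae
      (Filter.Eventually.of_forall fun x => ENNReal.toReal_nonneg)
      hxm.ennreal_toReal.aestronglyMeasurable]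
    congr 1
    exact lintegral_congr fun x => ENNReal.ofReal_toReal (hinner_ne x)
  -- Step 2: unfold by Tonelli and translation invariance
  have step2 : L = ∫⁻ z, F z * volume (Ω ∩ {y | y + z ∈ Ωᶜ}) := by
    have hS : ∀ z, MeasurableSet {y : EuclideanSpace ℝ (Fin n) | y + z ∈ Ωᶜ} :=
      fun z => (measurable_add_const z) hΩm.compl
    have hUm : Measurable (Function.uncurry fun x y : EuclideanSpace ℝ (Fin n) => F (x - y)) :=
      hFm.comp (measurable_fst.sub measurable_snd)
    rw [hL_def, lintegral_lintegral_swap hUm.aemeasurable]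
    have inner : ∀ y, (∫⁻ x in Ωᶜ, F (x - y)) =
        ∫⁻ z, (Ωᶜ.indicator (fun _ => (1:ℝ≥0∞)) (y + z)) * F z := by
      intro y
      rw [← lintegral_indicator hΩm.compl _, ← lintegral_add_right_eq_self _ y]
      congr 1; ext z
      by_cases hz : z + y ∈ Ωᶜ
      · simp [indicator_of_mem hz, indicator_of_mem (show y + z ∈ Ωᶜ by rwa [add_comm]),
          add_sub_cancel_right]
      · simp [indicator_of_notMem hz, indicator_of_notMem (show y + z ∉ Ωᶜ by rwa [add_comm])]
    simp_rw [inner]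
    have hGm : Measurable (Function.uncurry fun (y z : EuclideanSpace ℝ (Fin n)) =>
        (Ωᶜ.indicator (fun _ => (1:ℝ≥0∞)) (y + z)) * F z) :=
      ((measurable_const.indicator hΩm.compl).comp (measurable_fst.add measurable_snd)).mul
        (hFm.comp measurable_snd)
    rw [lintegral_lintegral_swap hGm.aemeasurable]
    refine lintegral_congr fun z => ?_
    calc (∫⁻ y in Ω, Ωᶜ.indicator (fun _ => (1:ℝ≥0∞)) (y + z) * F z)
        = F z * ∫⁻ y in Ω, {y | y + z ∈ Ωᶜ}.indicator (fun _ => (1:ℝ≥0∞)) y := by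
          rw [← lintegral_const_mul' _ _ (show F z ≠ ∞ from ENNReal.ofReal_ne_top)]
          refine lintegral_congr fun y => ?_
          by_cases hy : y + z ∈ Ωᶜ
          · rw [indicator_of_mem hy, indicator_of_mem (show y ∈ {y | y + z ∈ Ωᶜ} from hy),
              one_mul, mul_one]
          · rw [indicator_of_notMem hy,
              indicator_of_notMem (show y ∉ {y | y + z ∈ Ωᶜ} from hy), zero_mul, mul_zero]
      _ = F z * volume (Ω ∩ {y | y + z ∈ Ωᶜ}) := by
          rw [lintegral_indicator (hS z) _, setLIntegral_one, Measure.restrict_apply (hS z),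
            inter_comm]
  -- Step 3: bound the translated volume by the sausage volume
  have step3 : L ≤ ∫⁻ z, F z * ms ‖z‖ := by
    rw [step2]
    refine lintegral_mono fun z => ?_
    refine mul_le_mul_right (measure_mono fun y hy => mem_sep hy.1 ?_) _
    exact HeatContent.seg_frontier Ω hy.1 hy.2
  -- Step 4: rescale `z = a • v`
  have step4 : (∫⁻ z, F z * ms ‖z‖) = R := by
    set G : EuclideanSpace ℝ (Fin n) → ℝ≥0∞ := fun z => F z * ms ‖z‖ with hG_def
    have hGm : Measurable G := hFm.mul (hmsm.comp measurable_norm)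
    have hd : Module.finrank ℝ (EuclideanSpace ℝ (Fin n)) = n := finrank_euclideanSpace_fin
    have hmap := Measure.map_addHaar_smul (volume : Measure (EuclideanSpace ℝ (Fin n)))
      (ne_of_gt ha)
    have h1 : (∫⁻ v, G (a • v)) = ENNReal.ofReal ((a ^ n)⁻¹) * ∫⁻ z, G z := by
      rw [← lintegral_map hGm (measurable_const_smul a), hmap, hd, lintegral_smul_measure,
        abs_of_nonneg (inv_nonneg.2 (pow_nonneg ha.le n)), smul_eq_mul]
    have han : (0:ℝ) < a ^ n := pow_pos ha n
    have h2 : (∫⁻ z, G z) = ENNReal.ofReal (a ^ n) * ∫⁻ v, G (a • v) := by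
      rw [h1, ← mul_assoc, ← ENNReal.ofReal_mul (le_of_lt han),
        mul_inv_cancel₀ (ne_of_gt han), ENNReal.ofReal_one, one_mul]
    rw [show (∫⁻ z, F z * ms ‖z‖) = ∫⁻ z, G z from rfl, h2, hR_def,
      ← lintegral_const_mul' _ _ ENNReal.ofReal_ne_top]
    refine lintegral_congr fun v => ?_
    have hnorm : ‖a • v‖ = a * ‖v‖ := by
      rw [norm_smul, Real.norm_eq_abs, abs_of_pos ha]
    have hexp : -(a * ‖v‖) ^ 2 / (4 * D * t) = -‖v‖ ^ 2 := by
      rw [mul_pow, ha2]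
      field_simp
    have hkey : a ^ n * c = Real.pi ^ (-(n : ℝ) / 2) := by
      have h4 : (0:ℝ) < 4 * D * t := by positivity
      have hsq : a = Real.sqrt (4 * D * t) := by
        rw [ha_def, show (4:ℝ) * D * t = 4 * (D * t) by ring,
          Real.sqrt_mul (by norm_num) (D * t),
          show Real.sqrt 4 = 2 by
            rw [show (4:ℝ) = 2 ^ 2 by norm_num, Real.sqrt_sq (by norm_num)]]
      have hpow : a ^ n = (4 * D * t) ^ ((n : ℝ) / 2) := by
        rw [hsq, Real.sqrt_eq_rpow, ← Real.rpow_natCast ((4 * D * t) ^ ((1:ℝ)/2)) n,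
          ← Real.rpow_mul h4.le, show (1:ℝ)/2 * (n:ℝ) = (n:ℝ)/2 by ring]
      rw [hpow, hc_def, show (4:ℝ) * Real.pi * D * t = (4 * D * t) * Real.pi by ring,
        Real.mul_rpow h4.le hπ.le, ← mul_assoc, ← Real.rpow_add h4,
        show (n:ℝ)/2 + -(n:ℝ)/2 = 0 by ring, Real.rpow_zero, one_mul]
    rw [hG_def]
    simp only []
    rw [hF_def]
    simp only []
    rw [hnorm, hexp, ← mul_assoc, ← ENNReal.ofReal_mul (pow_nonneg ha.le n), ← mul_assoc, hkey]
  -- Step 5: the right-hand side is finite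
  have step5 : R ≠ ∞ := by
    have hg : Integrable (fun v : EuclideanSpace ℝ (Fin n) => Real.exp (-‖v‖ ^ 2)) := by
      have h := (GaussianFourier.integrable_cexp_neg_mul_sq_norm_add
        (V := EuclideanSpace ℝ (Fin n)) (b := 1) (by norm_num) 0 0).norm
      refine h.congr (Filter.Eventually.of_forall fun v => ?_)
      show ‖Complex.exp _‖ = _
      rw [Complex.norm_exp]
      congr 1
      norm_cast
      simp [inner_zero_left]
    have hfin : (∫⁻ v : EuclideanSpace ℝ (Fin n),
        ENNReal.ofReal (Real.exp (-‖v‖ ^ 2))) < ∞ := hg.lintegral_lt_top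
    have hb : R ≤ (ENNReal.ofReal (Real.pi ^ (-(n : ℝ) / 2)) *
        ∫⁻ v : EuclideanSpace ℝ (Fin n), ENNReal.ofReal (Real.exp (-‖v‖ ^ 2))) * volume Ω := by
      rw [hR_def]
      calc (∫⁻ v : EuclideanSpace ℝ (Fin n),
          ENNReal.ofReal (Real.pi ^ (-(n : ℝ) / 2) * Real.exp (-‖v‖ ^ 2)) * ms (a * ‖v‖))
          ≤ ∫⁻ v : EuclideanSpace ℝ (Fin n),
            ENNReal.ofReal (Real.pi ^ (-(n : ℝ) / 2) * Real.exp (-‖v‖ ^ 2)) * volume Ω :=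
            lintegral_mono fun v => mul_le_mul_right (hms_le _) _
        _ = (∫⁻ v : EuclideanSpace ℝ (Fin n),
            ENNReal.ofReal (Real.pi ^ (-(n : ℝ) / 2) * Real.exp (-‖v‖ ^ 2))) * volume Ω :=
            lintegral_mul_const' _ _ hΩvol.ne
        _ = (ENNReal.ofReal (Real.pi ^ (-(n : ℝ) / 2)) *
            ∫⁻ v : EuclideanSpace ℝ (Fin n), ENNReal.ofReal (Real.exp (-‖v‖ ^ 2))) * volume Ω := by
            rw [← lintegral_const_mul' _ _ ENNReal.ofReal_ne_top]
            congr 1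
            exact lintegral_congr fun v => by
              rw [← ENNReal.ofReal_mul (Real.rpow_nonneg hπ.le _)]
    exact ne_top_of_le_ne_top
      (ENNReal.mul_ne_top (ENNReal.mul_ne_top ENNReal.ofReal_ne_top hfin.ne) hΩvol.ne) hb
  -- Step 6: the right-hand side integral equals `R.toReal`
  have step6 : (∫ v : EuclideanSpace ℝ (Fin n),
      Real.pi ^ (-(n : ℝ) / 2) * Real.exp (-‖v‖ ^ 2) *
        (volume {x ∈ Ω | Metric.infDist x (frontier Ω) ≤ a * ‖v‖}).toReal) = R.toReal := by
    have hmeas : AEStronglyMeasurable (fun v : EuclideanSpace ℝ (Fin n) =>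
        Real.pi ^ (-(n : ℝ) / 2) * Real.exp (-‖v‖ ^ 2) * (ms (a * ‖v‖)).toReal) volume :=
      (((measurable_const.mul (by fun_prop :
          Measurable fun v : EuclideanSpace ℝ (Fin n) => Real.exp (-‖v‖ ^ 2)))).mul
        hmsv.ennreal_toReal).aestronglyMeasurable
    rw [integral_eq_lintegral_of_nonneg_ae
      (Filter.Eventually.of_forall fun v =>
        mul_nonneg (by positivity) ENNReal.toReal_nonneg) hmeas]
    congr 1
    refine lintegral_congr fun v => ?_
    rw [ENNReal.ofReal_mul (by positivity), ENNReal.ofReal_toReal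
      (ne_top_of_le_ne_top hΩvol.ne (hms_le _))]
  rw [step1, step6]
  exact ENNReal.toReal_mono step5 (step4 ▸ step3)
end

section
/- Let Ω ⊂ ℝⁿ be a measurable set, D > 0, t > 0, ε > 0, and define u(x,t) = ∫_Ω (4πDt)^{-n/2} exp(−‖x−y‖²/(4Dt)) dy. If x ∈ Ω satisfies infDist(x, ℝⁿ ∖ Ω) ≥ ε, then 0 ≤ 1 − u(x,t) ≤ ∫_{{v ∈ ℝⁿ : ‖v‖ ≥ ε/(2√(Dt))}} π^{-n/2} e^{−‖v‖²} dv (a Gaussian-tail version of the principle of "not feeling the boundary": points at distance ≥ ε from the complement stay hot up to a Gaussian tail error). -/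
open MeasureTheory Set

section aux

variable {n : ℕ}

local notation "E" => EuclideanSpace ℝ (Fin n)

lemma gauss_int : ∫ v : EuclideanSpace ℝ (Fin n),
    Real.pi ^ (-(n : ℝ) / 2) * Real.exp (-‖v‖ ^ 2) = 1 := by
  rw [integral_const_mul]
  have h1 : ∫ v : EuclideanSpace ℝ (Fin n), Real.exp (-‖v‖ ^ 2)
      = (Real.pi / 1) ^ ((Module.finrank ℝ (EuclideanSpace ℝ (Fin n))) / 2 : ℝ) := by
    rw [← GaussianFourier.integral_rexp_neg_mul_sq_norm one_pos]
    simp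
  rw [h1]
  rw [finrank_euclideanSpace_fin, div_one]
  rw [← Real.rpow_add Real.pi_pos, show -(n:ℝ)/2 + (n:ℝ)/2 = 0 by ring, Real.rpow_zero]

lemma gauss_integrable : Integrable (fun v : EuclideanSpace ℝ (Fin n) ↦ Real.exp (-‖v‖ ^ 2)) := by
  have h := (GaussianFourier.integrable_cexp_neg_mul_sq_norm_add
    (V := EuclideanSpace ℝ (Fin n)) (b := 1) (by norm_num) 0 0).norm
  refine h.congr (Filter.Eventually.of_forall fun v ↦ ?_)
  simp [Complex.norm_exp, ← Complex.ofReal_pow]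

end aux

/-- Gaussian-tail version of the principle of "not feeling the boundary": if `x ∈ Ω` is at
distance at least `ε` from the complement of `Ω`, then `0 ≤ 1 − u(x,t)` and `1 − u(x,t)` is
bounded by the Gaussian tail integral over `{‖v‖ ≥ ε/(2√(Dt))}`. -/
theorem not_feeling_the_boundary
    {n : ℕ} (Ω : Set (EuclideanSpace ℝ (Fin n))) (hΩm : MeasurableSet Ω)
    (D t ε : ℝ) (hD : 0 < D) (ht : 0 < t) (hε : 0 < ε)
    (x : EuclideanSpace ℝ (Fin n)) (hx : x ∈ Ω)
    (hdist : ε ≤ Metric.infDist x Ωᶜ) :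
    0 ≤ 1 - (∫ y in Ω,
        (4 * Real.pi * D * t) ^ (-(n : ℝ) / 2) * Real.exp (-‖x - y‖ ^ 2 / (4 * D * t))) ∧
    1 - (∫ y in Ω,
        (4 * Real.pi * D * t) ^ (-(n : ℝ) / 2) * Real.exp (-‖x - y‖ ^ 2 / (4 * D * t))) ≤
      ∫ v in {v : EuclideanSpace ℝ (Fin n) | ε / (2 * Real.sqrt (D * t)) ≤ ‖v‖},
        Real.pi ^ (-(n : ℝ) / 2) * Real.exp (-‖v‖ ^ 2) := by
  set c : ℝ := 2 * Real.sqrt (D * t) with hc_def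
  have hc : 0 < c := by positivity
  have hc2 : c ^ 2 = 4 * D * t := by
    rw [hc_def, mul_pow, Real.sq_sqrt (by positivity)]
    ring
  set g : EuclideanSpace ℝ (Fin n) → ℝ :=
    fun v ↦ Real.pi ^ (-(n : ℝ) / 2) * Real.exp (-‖v‖ ^ 2) with hg_def
  set K : EuclideanSpace ℝ (Fin n) → ℝ :=
    fun y ↦ (4 * Real.pi * D * t) ^ (-(n : ℝ) / 2) * Real.exp (-‖x - y‖ ^ 2 / (4 * D * t))
    with hK_def
  -- key pointwise identity
  have hcoef : (4 * Real.pi * D * t) ^ (-(n : ℝ) / 2)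
      = Real.pi ^ (-(n : ℝ) / 2) * (c ^ n)⁻¹ := by
    have h4 : 4 * Real.pi * D * t = Real.pi * c ^ 2 := by rw [hc2]; ring
    rw [h4, Real.mul_rpow Real.pi_pos.le (by positivity)]
    congr 1
    rw [← Real.rpow_natCast c 2, ← Real.rpow_mul hc.le]
    rw [show ((2:ℕ) : ℝ) * (-(n : ℝ) / 2) = -(n : ℝ) by push_cast; ring]
    rw [Real.rpow_neg hc.le, Real.rpow_natCast]
  have hKg : ∀ y, K y = (c ^ n)⁻¹ * g (c⁻¹ • (y - x)) := by
    intro y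
    have hnorm : ‖c⁻¹ • (y - x)‖ ^ 2 = ‖x - y‖ ^ 2 / (4 * D * t) := by
      rw [norm_smul, norm_inv, Real.norm_eq_abs, abs_of_pos hc, mul_pow, ← hc2,
        norm_sub_rev]
      field_simp
    simp only [hK_def, hg_def, hcoef, hnorm]
    rw [neg_div]
    ring
  -- integrability of g and K
  have hg_int : Integrable g := (gauss_integrable (n := n)).const_mul _
  have hgK_int : Integrable (fun y ↦ g (c⁻¹ • (y - x))) := by
    have h1 : Integrable (fun y : EuclideanSpace ℝ (Fin n) ↦ g (c⁻¹ • y)) :=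
      hg_int.comp_smul (inv_ne_zero hc.ne')
    exact h1.comp_sub_right x
  have hK_int : Integrable K := by
    refine (hgK_int.const_mul ((c ^ n)⁻¹)).congr (Filter.Eventually.of_forall fun y ↦ ?_)
    rw [hKg]
  -- change of variables lemma
  have hcov : ∀ f : EuclideanSpace ℝ (Fin n) → ℝ,
      ∫ y, f (c⁻¹ • (y - x)) = c ^ n * ∫ v, f v := by
    intro f
    rw [integral_sub_right_eq_self (fun y ↦ f (c⁻¹ • y)) x]
    rw [Measure.integral_comp_smul volume f c⁻¹]
    rw [finrank_euclideanSpace_fin, inv_pow, inv_inv, abs_of_pos (pow_pos hc n),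
      smul_eq_mul]
  -- total integral is 1
  have htotal : ∫ y, K y = 1 := by
    simp_rw [hKg]
    rw [integral_const_mul, hcov g, hg_def, gauss_int]
    field_simp
  -- split
  have hsplit : (∫ y in Ω, K y) + ∫ y in Ωᶜ, K y = 1 := by
    rw [integral_add_compl hΩm hK_int, htotal]
  have hKnonneg : ∀ y, 0 ≤ K y := fun y ↦ by
    have := Real.exp_pos (-‖x - y‖ ^ 2 / (4 * D * t))
    have h4 : (0:ℝ) < 4 * Real.pi * D * t := by positivity
    positivity
  have h1 : 1 - ∫ y in Ω, K y = ∫ y in Ωᶜ, K y := by linarith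
  constructor
  · rw [h1]
    exact setIntegral_nonneg hΩm.compl fun y _ ↦ hKnonneg y
  · rw [h1]
    -- monotone step
    set S : Set (EuclideanSpace ℝ (Fin n)) := {y | ε ≤ ‖x - y‖} with hS_def
    have hSm : MeasurableSet S := by
      have : Continuous fun y : EuclideanSpace ℝ (Fin n) ↦ ‖x - y‖ :=
        (continuous_const.sub continuous_id).norm
      exact measurableSet_le measurable_const this.measurable
    have hsub : Ωᶜ ⊆ S := by
      intro y hy
      have := Metric.infDist_le_dist_of_mem (x := x) hy
      have hd : dist x y = ‖x - y‖ := by rw [dist_eq_norm]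
      simp only [hS_def, mem_setOf_eq]
      linarith [hdist, this, hd ▸ this]
    have hmono : (∫ y in Ωᶜ, K y) ≤ ∫ y in S, K y := by
      refine setIntegral_mono_set hK_int.integrableOn
        (Filter.Eventually.of_forall fun y ↦ hKnonneg y) (HasSubset.Subset.eventuallyLE hsub)
    refine hmono.trans_eq ?_
    -- change of variables for the tail
    set T : Set (EuclideanSpace ℝ (Fin n)) := {v | ε / c ≤ ‖v‖} with hT_def
    have hTm : MeasurableSet T :=
      measurableSet_le measurable_const continuous_norm.measurable
    have hindic : ∀ y, S.indicator K y = (c ^ n)⁻¹ * T.indicator g (c⁻¹ • (y - x)) := by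
      intro y
      have hmem : y ∈ S ↔ c⁻¹ • (y - x) ∈ T := by
        simp only [hS_def, hT_def, mem_setOf_eq, norm_smul, norm_inv, Real.norm_eq_abs,
          abs_of_pos hc, norm_sub_rev y x]
        rw [div_le_iff₀ hc, mul_comm c⁻¹, mul_assoc, inv_mul_cancel₀ hc.ne', mul_one]
      by_cases hy : y ∈ S
      · rw [indicator_of_mem hy, indicator_of_mem (hmem.mp hy), hKg]
      · rw [indicator_of_notMem hy, indicator_of_notMem (fun h ↦ hy (hmem.mpr h)),
          mul_zero]
    calc (∫ y in S, K y) = ∫ y, S.indicator K y := (integral_indicator hSm).symm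
      _ = ∫ y, (c ^ n)⁻¹ * T.indicator g (c⁻¹ • (y - x)) := by
          exact integral_congr_ae (Filter.Eventually.of_forall hindic)
      _ = (c ^ n)⁻¹ * (c ^ n * ∫ v, T.indicator g v) := by
          rw [integral_const_mul, hcov (T.indicator g)]
      _ = ∫ v in T, g v := by
          rw [← mul_assoc, inv_mul_cancel₀ (pow_pos hc n).ne', one_mul,
            integral_indicator hTm]
end

section
/- Let D₊, D₋ > 0, A = (√D₊ − √D₋)/(√D₊ + √D₋), and Γ₊₊(s,s₁,t) = (4πD₊t)^{-1/2}[exp(−(s−s₁)²/(4D₊t)) + A·exp(−(s+s₁)²/(4D₊t))]. Then for all s, s₁ > 0 with s ≠ s₁, the Varadhan short-time bound holds: lim_{t→0⁺} t · ln Γ₊₊(s, s₁, t) = −(s − s₁)²/(4D₊). -/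
open MeasureTheory Set Filter

/-- Varadhan short-time bound for the 'same side' component of the `λ = ∞` transmission
Green function: `lim_{t→0⁺} t · ln Γ₊₊(s, s₁, t) = −(s − s₁)²/(4D₊)` for `s, s₁ > 0`, `s ≠ s₁`. -/
theorem varadhan_bound_lambda_infty_same_side
    (Dp Dm A : ℝ) (hDp : 0 < Dp) (hDm : 0 < Dm)
    (hA : A = (Real.sqrt Dp - Real.sqrt Dm) / (Real.sqrt Dp + Real.sqrt Dm))
    (Γpp : ℝ → ℝ → ℝ → ℝ)
    (hΓpp : ∀ s s₁ t, Γpp s s₁ t = (4 * Real.pi * Dp * t) ^ (-(1 : ℝ) / 2) *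
        (Real.exp (-(s - s₁) ^ 2 / (4 * Dp * t)) + A * Real.exp (-(s + s₁) ^ 2 / (4 * Dp * t))))
    (s s₁ : ℝ) (hs : 0 < s) (hs₁ : 0 < s₁) (hne : s ≠ s₁) :
    Tendsto (fun t => t * Real.log (Γpp s s₁ t)) (nhdsWithin 0 (Set.Ioi 0))
      (nhds (-(s - s₁) ^ 2 / (4 * Dp))) := by
  have hπ := Real.pi_pos
  have hsp : 0 < Real.sqrt Dp := Real.sqrt_pos.mpr hDp
  have hsm : 0 < Real.sqrt Dm := Real.sqrt_pos.mpr hDm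
  have hA1 : -1 < A := by
    rw [hA, lt_div_iff₀ (by positivity)]; nlinarith
  have hA2 : A < 1 := by
    rw [hA, div_lt_iff₀ (by positivity)]; nlinarith
  set a : ℝ := (s - s₁) ^ 2 / (4 * Dp) with ha
  set b : ℝ := (s + s₁) ^ 2 / (4 * Dp) with hb
  have hab : a < b := (div_lt_div_iff_of_pos_right (by positivity)).mpr (by nlinarith)
  set c0 : ℝ := (4 * Real.pi * Dp) ^ (-(1 : ℝ) / 2) with hc0
  have hc0pos : 0 < c0 := Real.rpow_pos_of_pos (by positivity) _
  -- the eventual rewriting of t * log Γ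
  have hEq : ∀ᶠ t in nhdsWithin (0:ℝ) (Set.Ioi 0),
      t * Real.log (Γpp s s₁ t) =
        t * Real.log c0 + (-(1 : ℝ) / 2) * (Real.log t * t) + (-a)
          + t * Real.log (1 + A * Real.exp (-((b - a) / t))) := by
    filter_upwards [eventually_mem_nhdsWithin] with t ht
    have ht0 : 0 < t := ht
    have hepos : 0 < Real.exp (-((b - a) / t)) := Real.exp_pos _
    have helt : Real.exp (-((b - a) / t)) < 1 := by
      rw [Real.exp_lt_one_iff]
      have : 0 < (b - a) / t := div_pos (by linarith) ht0
      linarith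
    have hpos1 : 0 < 1 + A * Real.exp (-((b - a) / t)) := by nlinarith
    have hΓ : Γpp s s₁ t = c0 * t ^ (-(1 : ℝ) / 2) *
        (Real.exp (-(a / t)) * (1 + A * Real.exp (-((b - a) / t)))) := by
      rw [hΓpp, ← Real.mul_rpow (by positivity) (le_of_lt ht0)]
      have h1 : -(s - s₁) ^ 2 / (4 * Dp * t) = -(a / t) := by
        rw [ha]; field_simp
      have h2 : -(s + s₁) ^ 2 / (4 * Dp * t) = -(a / t) + -((b - a) / t) := by
        rw [ha, hb]; field_simp; ring
      rw [h1, h2, Real.exp_add]; ring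
    rw [hΓ, Real.log_mul (by positivity) (by positivity),
      Real.log_mul (by positivity) (by positivity),
      Real.log_mul (Real.exp_ne_zero _) (ne_of_gt hpos1),
      Real.log_rpow ht0, Real.log_exp]
    field_simp
    ring
  rw [show -(s - s₁) ^ 2 / (4 * Dp) = 0 + (-(1:ℝ)/2) * 0 + (-a) + 0 by rw [ha]; ring]
  refine Tendsto.congr' (hEq.mono fun t h => h.symm) ?_
  refine Tendsto.add (Tendsto.add (Tendsto.add ?_ ?_) tendsto_const_nhds) ?_
  · simpa using ((continuous_mul_right (Real.log c0)).tendsto (0:ℝ)).mono_left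
      nhdsWithin_le_nhds
  · exact Tendsto.const_mul _ (by simpa using tendsto_log_mul_rpow_nhdsGT_zero one_pos)
  · -- t * log (1 + A * exp (-((b-a)/t))) → 0
    have h1 : Tendsto (fun t : ℝ => -((b - a) / t)) (nhdsWithin 0 (Set.Ioi 0)) atBot := by
      apply tendsto_neg_atTop_atBot.comp
      exact (by simpa [div_eq_mul_inv] using tendsto_inv_nhdsGT_zero.const_mul_atTop (by linarith : (0:ℝ) < b - a) : Tendsto (fun t : ℝ => (b - a) / t) (nhdsWithin 0 (Set.Ioi 0)) atTop)
    have h2 : Tendsto (fun t : ℝ => Real.log (1 + A * Real.exp (-((b - a) / t))))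
        (nhdsWithin 0 (Set.Ioi 0)) (nhds 0) := by
      have h3 : Tendsto (fun t : ℝ => 1 + A * Real.exp (-((b - a) / t)))
          (nhdsWithin 0 (Set.Ioi 0)) (nhds 1) := by
        have := (Real.tendsto_exp_atBot.comp h1).const_mul A
        simpa using (tendsto_const_nhds (x := (1:ℝ)) (f := nhdsWithin 0 (Set.Ioi 0))).add this
      have := (Real.continuousAt_log (by norm_num : (1:ℝ) ≠ 0)).tendsto.comp h3
      simpa [Function.comp_def] using this
    have := (((continuous_id.tendsto (0:ℝ)).mono_left nhdsWithin_le_nhds)).mul h2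
    simpa using this
end

section
/- Let D₊, D₋ > 0, λ > 0, α = 1/√D₋ + 1/√D₊, and Erfc(x) = (2/√π)∫_x^∞ e^{−u²} du. Define G₊₊(s,s₁,t) = (4πD₊t)^{-1/2}[exp(−(s−s₁)²/(4D₊t)) + exp(−(s+s₁)²/(4D₊t))] − (λ/D₊)·exp(λα(s+s₁)/√D₊ + λ²α²t)·Erfc((s+s₁)/(2√(D₊t)) + λα√t), and G₋₊(s,s₁,t) = (λ/√(D₋D₊))·exp((λα/√D₋)(−s + s₁√(D₋/D₊)) + λ²α²t)·Erfc((−s + s₁√(D₋/D₊))/(2√(D₋t)) + λα√t). Then for every fixed s₁ > 0 and all t > 0: (i) for s > 0, ∂G₊₊/∂t = D₊ · ∂²G₊₊/∂s²; (ii) for s < 0, ∂G₋₊/∂t = D₋ · ∂²G₋₊/∂s². -/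
open MeasureTheory Set

open MeasureTheory Set

private lemma integrable_exp_neg_sq' : Integrable (fun u : ℝ => Real.exp (-u ^ 2)) := by
  simpa using integrable_exp_neg_mul_sq (by norm_num : (0:ℝ) < 1)

private lemma hasDerivAt_Ioi_int (x : ℝ) :
    HasDerivAt (fun y : ℝ => ∫ u in Set.Ioi y, Real.exp (-u ^ 2)) (-Real.exp (-x ^ 2)) x := by
  have hint := integrable_exp_neg_sq'
  have key : ∀ y : ℝ, (∫ u in Set.Ioi y, Real.exp (-u ^ 2))
      = (∫ u, Real.exp (-u ^ 2)) - ((∫ u in Set.Iic (0:ℝ), Real.exp (-u ^ 2))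
        + ∫ u in (0:ℝ)..y, Real.exp (-u ^ 2)) := by
    intro y
    have h1 : (∫ u in Set.Iic y, Real.exp (-u ^ 2)) + ∫ u in Set.Ioi y, Real.exp (-u ^ 2)
        = ∫ u, Real.exp (-u ^ 2) := by
      simpa [Set.compl_Iic] using integral_add_compl (measurableSet_Iic (a := y)) hint
    have h2 : (∫ u in Set.Iic y, Real.exp (-u ^ 2)) - ∫ u in Set.Iic (0:ℝ), Real.exp (-u ^ 2)
        = ∫ u in (0:ℝ)..y, Real.exp (-u ^ 2) :=
      intervalIntegral.integral_Iic_sub_Iic hint.integrableOn hint.integrableOn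
    linarith
  have hd : HasDerivAt (fun y : ℝ => ∫ u in (0:ℝ)..y, Real.exp (-u ^ 2))
      (Real.exp (-x ^ 2)) x :=
    ((Real.continuous_exp.comp (continuous_pow 2).neg).integral_hasStrictDerivAt 0 x).hasDerivAt
  have := ((hd.const_add (∫ u in Set.Iic (0:ℝ), Real.exp (-u ^ 2))).const_sub
      (∫ u, Real.exp (-u ^ 2)))
  simpa [key] using this


noncomputable def HX (Erfc : ℝ → ℝ) (D c x t : ℝ) : ℝ :=
  Real.exp (c * x / Real.sqrt D + c ^ 2 * t) *
    (c / Real.sqrt D * Erfc (x / (2 * Real.sqrt (D * t)) + c * Real.sqrt t) +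
      -(2 / Real.sqrt Real.pi) *
        Real.exp (-(x / (2 * Real.sqrt (D * t)) + c * Real.sqrt t) ^ 2) *
        (1 / (2 * Real.sqrt (D * t))))

noncomputable def HXX (Erfc : ℝ → ℝ) (D c x t : ℝ) : ℝ :=
  Real.exp (c * x / Real.sqrt D + c ^ 2 * t) *
    ((c / Real.sqrt D) ^ 2 * Erfc (x / (2 * Real.sqrt (D * t)) + c * Real.sqrt t) +
      -(2 / Real.sqrt Real.pi) *
        Real.exp (-(x / (2 * Real.sqrt (D * t)) + c * Real.sqrt t) ^ 2) *
        (c / Real.sqrt D / Real.sqrt (D * t) -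
          (x / (2 * Real.sqrt (D * t)) + c * Real.sqrt t) / (2 * (D * t))))

variable (Erfc : ℝ → ℝ) (D c : ℝ)

private lemma hfun_x
    (hE : ∀ z : ℝ, HasDerivAt Erfc (-(2 / Real.sqrt Real.pi) * Real.exp (-z ^ 2)) z)
    (hD : 0 < D) (t : ℝ) (ht : 0 < t) (x : ℝ) :
    HasDerivAt (fun ξ => Real.exp (c * ξ / Real.sqrt D + c ^ 2 * t) *
        Erfc (ξ / (2 * Real.sqrt (D * t)) + c * Real.sqrt t))
      (HX Erfc D c x t) x := by
  have hw : HasDerivAt (fun ξ : ℝ => c * ξ / Real.sqrt D + c ^ 2 * t) (c / Real.sqrt D) x := by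
    simpa using (((hasDerivAt_id x).const_mul c).div_const (Real.sqrt D)).add_const (c ^ 2 * t)
  have hz : HasDerivAt (fun ξ : ℝ => ξ / (2 * Real.sqrt (D * t)) + c * Real.sqrt t)
      (1 / (2 * Real.sqrt (D * t))) x := by
    simpa [one_div] using ((hasDerivAt_id x).div_const (2 * Real.sqrt (D * t))).add_const
      (c * Real.sqrt t)
  have hEz := (hE (x / (2 * Real.sqrt (D * t)) + c * Real.sqrt t)).comp x hz
  simp only [Function.comp_def] at hEz
  have := hw.exp.mul hEz
  rw [HX]
  refine this.congr_deriv ?_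
  ring

private lemma hfun_xx
    (hE : ∀ z : ℝ, HasDerivAt Erfc (-(2 / Real.sqrt Real.pi) * Real.exp (-z ^ 2)) z)
    (hD : 0 < D) (t : ℝ) (ht : 0 < t) (x : ℝ) :
    HasDerivAt (fun ξ => HX Erfc D c ξ t) (HXX Erfc D c x t) x := by
  have hst : 0 < Real.sqrt (D * t) := Real.sqrt_pos.2 (mul_pos hD ht)
  have hw : HasDerivAt (fun ξ : ℝ => c * ξ / Real.sqrt D + c ^ 2 * t) (c / Real.sqrt D) x := by
    simpa using (((hasDerivAt_id x).const_mul c).div_const (Real.sqrt D)).add_const (c ^ 2 * t)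
  have hz : HasDerivAt (fun ξ : ℝ => ξ / (2 * Real.sqrt (D * t)) + c * Real.sqrt t)
      (1 / (2 * Real.sqrt (D * t))) x := by
    simpa [one_div] using ((hasDerivAt_id x).div_const (2 * Real.sqrt (D * t))).add_const
      (c * Real.sqrt t)
  have hEz := (hE (x / (2 * Real.sqrt (D * t)) + c * Real.sqrt t)).comp x hz
  simp only [Function.comp_def] at hEz
  have hA : HasDerivAt (fun ξ : ℝ => c / Real.sqrt D *
      Erfc (ξ / (2 * Real.sqrt (D * t)) + c * Real.sqrt t))
      (c / Real.sqrt D * (-(2 / Real.sqrt Real.pi) *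
        Real.exp (-(x / (2 * Real.sqrt (D * t)) + c * Real.sqrt t) ^ 2) *
        (1 / (2 * Real.sqrt (D * t))))) x := hEz.const_mul _
  have hB : HasDerivAt (fun ξ : ℝ => -(2 / Real.sqrt Real.pi) *
        Real.exp (-(ξ / (2 * Real.sqrt (D * t)) + c * Real.sqrt t) ^ 2) *
        (1 / (2 * Real.sqrt (D * t))))
      ((-(2 / Real.sqrt Real.pi) *
        (Real.exp (-(x / (2 * Real.sqrt (D * t)) + c * Real.sqrt t) ^ 2) *
        -(2 * (x / (2 * Real.sqrt (D * t)) + c * Real.sqrt t) ^ 1 *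
          (1 / (2 * Real.sqrt (D * t)))))) * (1 / (2 * Real.sqrt (D * t)))) x :=
    (((hz.pow 2).neg).exp.const_mul (-(2 / Real.sqrt Real.pi))).mul_const _
  have hmain := hw.exp.mul (hA.add hB)
  simp only [HX, HXX]
  simp only [Pi.add_apply] at hmain
  refine hmain.congr_deriv ?_
  have hsq : Real.sqrt (D * t) ^ 2 = D * t := Real.sq_sqrt (mul_pos hD ht).le
  have hD2 : Real.sqrt D ^ 2 = D := Real.sq_sqrt hD.le
  have hπ : Real.sqrt Real.pi ≠ 0 := (Real.sqrt_pos.2 Real.pi_pos).ne'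
  have hvpos : 0 < Real.sqrt D := Real.sqrt_pos.2 hD
  generalize hu : Real.sqrt (D * t) = u at hst hsq ⊢
  rw [← hsq]
  generalize hv : Real.sqrt D = v at hvpos hD2 ⊢

  field_simp
  ring

private lemma hfun_t
    (hE : ∀ z : ℝ, HasDerivAt Erfc (-(2 / Real.sqrt Real.pi) * Real.exp (-z ^ 2)) z)
    (hD : 0 < D) (x t : ℝ) (ht : 0 < t) :
    HasDerivAt (fun τ => Real.exp (c * x / Real.sqrt D + c ^ 2 * τ) *
        Erfc (x / (2 * Real.sqrt (D * τ)) + c * Real.sqrt τ))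
      (D * HXX Erfc D c x t) t := by
  have hDt : 0 < D * t := mul_pos hD ht
  have hst : 0 < Real.sqrt (D * t) := Real.sqrt_pos.2 hDt
  have hw : HasDerivAt (fun τ : ℝ => c * x / Real.sqrt D + c ^ 2 * τ) (c ^ 2) t := by
    simpa using ((hasDerivAt_id t).const_mul (c ^ 2)).const_add (c * x / Real.sqrt D)
  have hsqrtDt : HasDerivAt (fun τ : ℝ => Real.sqrt (D * τ))
      (1 / (2 * Real.sqrt (D * t)) * (D * 1)) t := by
    have := (Real.hasDerivAt_sqrt hDt.ne').comp t ((hasDerivAt_id t).const_mul D)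
    simpa [Function.comp_def] using this
  have hden := hsqrtDt.const_mul 2
  have hfrac : HasDerivAt (fun τ : ℝ => x / (2 * Real.sqrt (D * τ)))
      ((0 * (2 * Real.sqrt (D * t)) - x * (2 * (1 / (2 * Real.sqrt (D * t)) * (D * 1)))) /
        (2 * Real.sqrt (D * t)) ^ 2) t :=
    (hasDerivAt_const t x).div hden (by positivity)
  have hcst : HasDerivAt (fun τ : ℝ => c * Real.sqrt τ) (c * (1 / (2 * Real.sqrt t))) t :=
    (Real.hasDerivAt_sqrt ht.ne').const_mul c
  have hz := hfrac.add hcst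
  have hEz := (hE (x / (2 * Real.sqrt (D * t)) + c * Real.sqrt t)).comp t hz
  simp only [Function.comp_def] at hEz
  have hmain := hw.exp.mul hEz
  simp only [HXX]
  simp only [Pi.add_apply] at hmain
  refine hmain.congr_deriv ?_
  have hπ : Real.sqrt Real.pi ≠ 0 := (Real.sqrt_pos.2 Real.pi_pos).ne'
  have hmulsq : Real.sqrt (D * t) = Real.sqrt D * Real.sqrt t := Real.sqrt_mul hD.le t
  have hD2 : Real.sqrt D ^ 2 = D := Real.sq_sqrt hD.le
  have ht2 : Real.sqrt t ^ 2 = t := Real.sq_sqrt ht.le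
  have hvpos : 0 < Real.sqrt D := Real.sqrt_pos.2 hD
  have hwpos : 0 < Real.sqrt t := Real.sqrt_pos.2 ht
  rw [hmulsq]
  generalize hv : Real.sqrt D = v at hvpos hD2 ⊢
  generalize hw' : Real.sqrt t = w at hwpos ht2 ⊢
  rw [← hD2, ← ht2]
  field_simp
  ring

noncomputable def QX (D x t : ℝ) : ℝ :=
  (4 * Real.pi * D * t) ^ (-(1 : ℝ) / 2) * Real.exp (-x ^ 2 / (4 * D * t)) *
    (-x / (2 * (D * t)))

noncomputable def QXX (D x t : ℝ) : ℝ :=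
  (4 * Real.pi * D * t) ^ (-(1 : ℝ) / 2) * Real.exp (-x ^ 2 / (4 * D * t)) *
    (x ^ 2 / (4 * (D * t) ^ 2) - 1 / (2 * (D * t)))

private lemma gauss_x (hD : 0 < D) (t : ℝ) (ht : 0 < t) (x : ℝ) :
    HasDerivAt (fun ξ => (4 * Real.pi * D * t) ^ (-(1 : ℝ) / 2) *
      Real.exp (-ξ ^ 2 / (4 * D * t))) (QX D x t) x := by
  have h1 : HasDerivAt (fun ξ : ℝ => -ξ ^ 2 / (4 * D * t)) (-(2 * x ^ 1) / (4 * D * t)) x :=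
    ((hasDerivAt_pow 2 x).neg).div_const (4 * D * t)
  have := (h1.exp).const_mul ((4 * Real.pi * D * t) ^ (-(1 : ℝ) / 2))
  refine this.congr_deriv ?_
  rw [QX]
  have : (4 : ℝ) * D * t ≠ 0 := by positivity
  field_simp
  ring

private lemma gauss_xx (hD : 0 < D) (t : ℝ) (ht : 0 < t) (x : ℝ) :
    HasDerivAt (fun ξ => QX D ξ t) (QXX D x t) x := by
  have h1 : HasDerivAt (fun ξ : ℝ => -ξ ^ 2 / (4 * D * t)) (-(2 * x ^ 1) / (4 * D * t)) x :=
    ((hasDerivAt_pow 2 x).neg).div_const (4 * D * t)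
  have h2 := (h1.exp).const_mul ((4 * Real.pi * D * t) ^ (-(1 : ℝ) / 2))
  have h3 : HasDerivAt (fun ξ : ℝ => -ξ / (2 * (D * t))) (-1 / (2 * (D * t))) x := by
    simpa using ((hasDerivAt_id x).neg).div_const (2 * (D * t))
  have hmain := h2.mul h3
  simp only [QX, QXX]
  refine hmain.congr_deriv ?_
  have hne : (D : ℝ) * t ≠ 0 := by positivity
  field_simp
  ring

private lemma gauss_t (hD : 0 < D) (x t : ℝ) (ht : 0 < t) :
    HasDerivAt (fun τ => (4 * Real.pi * D * τ) ^ (-(1 : ℝ) / 2) *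
      Real.exp (-x ^ 2 / (4 * D * τ))) (D * QXX D x t) t := by
  have hpos : 0 < 4 * Real.pi * D * t := by positivity
  have hin : HasDerivAt (fun τ : ℝ => 4 * Real.pi * D * τ) (4 * Real.pi * D) t := by
    simpa using (hasDerivAt_id t).const_mul (4 * Real.pi * D)
  have hA : HasDerivAt (fun τ : ℝ => (4 * Real.pi * D * τ) ^ (-(1 : ℝ) / 2))
      (4 * Real.pi * D * (-(1 : ℝ) / 2) * (4 * Real.pi * D * t) ^ (-(1 : ℝ) / 2 - 1)) t :=
    hin.rpow_const (Or.inl hpos.ne')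
  have hin2 : HasDerivAt (fun τ : ℝ => 4 * D * τ) (4 * D) t := by
    simpa using (hasDerivAt_id t).const_mul (4 * D)
  have hB : HasDerivAt (fun τ : ℝ => -x ^ 2 / (4 * D * τ))
      ((0 * (4 * D * t) - -x ^ 2 * (4 * D)) / (4 * D * t) ^ 2) t :=
    (hasDerivAt_const t (-x ^ 2)).div hin2 (by positivity)
  have hmain := hA.mul hB.exp
  simp only [QXX]
  refine hmain.congr_deriv ?_
  rw [Real.rpow_sub_one hpos.ne']
  have h1 : (4 : ℝ) * Real.pi * D * t ≠ 0 := hpos.ne'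
  have h2 : (D : ℝ) * t ≠ 0 := by positivity
  have h3 : (4 : ℝ) * D * t ≠ 0 := by positivity
  field_simp
  ring


/-- Each component of the explicit Green function of the one-dimensional two-phase heat
transmission problem with finite interface resistance `λ` solves the corresponding heat
equation: `∂G₊₊/∂t = D₊ ∂²G₊₊/∂s²` for `s > 0` and `∂G₋₊/∂t = D₋ ∂²G₋₊/∂s²` for `s < 0`. -/
theorem green_function_finite_lambda_solves_heat_equation
    (Dp Dm lam α : ℝ) (hDp : 0 < Dp) (hDm : 0 < Dm) (hlam : 0 < lam)
    (hα : α = 1 / Real.sqrt Dm + 1 / Real.sqrt Dp)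
    (Erfc : ℝ → ℝ)
    (hErfc : ∀ x, Erfc x = (2 / Real.sqrt Real.pi) * ∫ u in Set.Ioi x, Real.exp (-u ^ 2))
    (Gpp Gmp : ℝ → ℝ → ℝ → ℝ)
    (hGpp : ∀ s s₁ t, Gpp s s₁ t = (4 * Real.pi * Dp * t) ^ (-(1 : ℝ) / 2) *
        (Real.exp (-(s - s₁) ^ 2 / (4 * Dp * t)) + Real.exp (-(s + s₁) ^ 2 / (4 * Dp * t))) -
        (lam / Dp) * Real.exp (lam * α * (s + s₁) / Real.sqrt Dp + lam ^ 2 * α ^ 2 * t) *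
          Erfc ((s + s₁) / (2 * Real.sqrt (Dp * t)) + lam * α * Real.sqrt t))
    (hGmp : ∀ s s₁ t, Gmp s s₁ t = (lam / Real.sqrt (Dm * Dp)) *
        Real.exp ((lam * α / Real.sqrt Dm) * (-s + s₁ * Real.sqrt (Dm / Dp)) +
          lam ^ 2 * α ^ 2 * t) *
          Erfc ((-s + s₁ * Real.sqrt (Dm / Dp)) / (2 * Real.sqrt (Dm * t)) +
            lam * α * Real.sqrt t))
    (s₁ : ℝ) (hs₁ : 0 < s₁) :
    (∀ s t : ℝ, 0 < t → 0 < s →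
      deriv (fun τ => Gpp s s₁ τ) t = Dp * deriv (deriv (fun σ => Gpp σ s₁ t)) s) ∧
    (∀ s t : ℝ, 0 < t → s < 0 →
      deriv (fun τ => Gmp s s₁ τ) t = Dm * deriv (deriv (fun σ => Gmp σ s₁ t)) s) := by
  have hE : ∀ z : ℝ, HasDerivAt Erfc (-(2 / Real.sqrt Real.pi) * Real.exp (-z ^ 2)) z := by
    intro z
    have h := (hasDerivAt_Ioi_int z).const_mul (2 / Real.sqrt Real.pi)
    have hfe : Erfc = fun y => 2 / Real.sqrt Real.pi * ∫ u in Set.Ioi y, Real.exp (-u ^ 2) :=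
      funext hErfc
    rw [hfe]
    simpa [mul_neg, neg_mul] using h
  constructor
  · -- Gpp part
    intro s t ht hs
    have hre : ∀ σ τ, Gpp σ s₁ τ =
        (4 * Real.pi * Dp * τ) ^ (-(1 : ℝ) / 2) * Real.exp (-(σ - s₁) ^ 2 / (4 * Dp * τ)) +
        (4 * Real.pi * Dp * τ) ^ (-(1 : ℝ) / 2) * Real.exp (-(σ + s₁) ^ 2 / (4 * Dp * τ)) -
        lam / Dp * (Real.exp (lam * α * (σ + s₁) / Real.sqrt Dp + (lam * α) ^ 2 * τ) *
          Erfc ((σ + s₁) / (2 * Real.sqrt (Dp * τ)) + lam * α * Real.sqrt τ)) := by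
      intro σ τ
      rw [hGpp, mul_pow]
      ring
    -- time derivative
    have hT : HasDerivAt (fun τ => Gpp s s₁ τ)
        (Dp * QXX Dp (s - s₁) t + Dp * QXX Dp (s + s₁) t -
          lam / Dp * (Dp * HXX Erfc Dp (lam * α) (s + s₁) t)) t := by
      simp only [hre]
      exact ((gauss_t (D := Dp) hDp (s - s₁) t ht).add
        (gauss_t (D := Dp) hDp (s + s₁) t ht)).sub
        ((hfun_t Erfc Dp (lam * α) hE hDp (s + s₁) t ht).const_mul (lam / Dp))
    -- first space derivative
    have hd1 : deriv (fun σ => Gpp σ s₁ t) = fun σ =>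
        QX Dp (σ - s₁) t + QX Dp (σ + s₁) t - lam / Dp * HX Erfc Dp (lam * α) (σ + s₁) t := by
      funext σ
      have e1 : HasDerivAt (fun σ' : ℝ => (4 * Real.pi * Dp * t) ^ (-(1 : ℝ) / 2) *
          Real.exp (-(σ' - s₁) ^ 2 / (4 * Dp * t))) (QX Dp (σ - s₁) t) σ := by
        have := (gauss_x (D := Dp) hDp t ht (σ - s₁)).comp σ ((hasDerivAt_id σ).sub_const s₁)
        simpa [Function.comp_def] using this
      have e2 : HasDerivAt (fun σ' : ℝ => (4 * Real.pi * Dp * t) ^ (-(1 : ℝ) / 2) *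
          Real.exp (-(σ' + s₁) ^ 2 / (4 * Dp * t))) (QX Dp (σ + s₁) t) σ := by
        have := (gauss_x (D := Dp) hDp t ht (σ + s₁)).comp σ ((hasDerivAt_id σ).add_const s₁)
        simpa [Function.comp_def] using this
      have e3 : HasDerivAt (fun σ' : ℝ =>
          Real.exp (lam * α * (σ' + s₁) / Real.sqrt Dp + (lam * α) ^ 2 * t) *
            Erfc ((σ' + s₁) / (2 * Real.sqrt (Dp * t)) + lam * α * Real.sqrt t))
          (HX Erfc Dp (lam * α) (σ + s₁) t) σ := by
        have := (hfun_x Erfc Dp (lam * α) hE hDp t ht (σ + s₁)).comp σ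
          ((hasDerivAt_id σ).add_const s₁)
        simpa [Function.comp_def] using this
      have := (e1.add e2).sub (e3.const_mul (lam / Dp))
      simp only [hre]
      exact this.deriv
    have hXX1 : HasDerivAt (fun σ => QX Dp (σ - s₁) t + QX Dp (σ + s₁) t -
        lam / Dp * HX Erfc Dp (lam * α) (σ + s₁) t)
        (QXX Dp (s - s₁) t + QXX Dp (s + s₁) t -
          lam / Dp * HXX Erfc Dp (lam * α) (s + s₁) t) s := by
      have f1 : HasDerivAt (fun σ : ℝ => QX Dp (σ - s₁) t) (QXX Dp (s - s₁) t) s := by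
        have := (gauss_xx (D := Dp) hDp t ht (s - s₁)).comp s ((hasDerivAt_id s).sub_const s₁)
        simpa [Function.comp_def] using this
      have f2 : HasDerivAt (fun σ : ℝ => QX Dp (σ + s₁) t) (QXX Dp (s + s₁) t) s := by
        have := (gauss_xx (D := Dp) hDp t ht (s + s₁)).comp s ((hasDerivAt_id s).add_const s₁)
        simpa [Function.comp_def] using this
      have f3 : HasDerivAt (fun σ : ℝ => HX Erfc Dp (lam * α) (σ + s₁) t)
          (HXX Erfc Dp (lam * α) (s + s₁) t) s := by
        have := (hfun_xx Erfc Dp (lam * α) hE hDp t ht (s + s₁)).comp s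
          ((hasDerivAt_id s).add_const s₁)
        simpa [Function.comp_def] using this
      exact (f1.add f2).sub (f3.const_mul (lam / Dp))
    rw [hT.deriv, hd1, hXX1.deriv]
    ring
  · -- Gmp part
    intro s t ht hs
    have hre : ∀ σ τ, Gmp σ s₁ τ = lam / Real.sqrt (Dm * Dp) *
        (Real.exp (lam * α * (-σ + s₁ * Real.sqrt (Dm / Dp)) / Real.sqrt Dm +
          (lam * α) ^ 2 * τ) *
          Erfc ((-σ + s₁ * Real.sqrt (Dm / Dp)) / (2 * Real.sqrt (Dm * τ)) +
            lam * α * Real.sqrt τ)) := by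
      intro σ τ
      rw [hGmp, mul_pow, div_mul_eq_mul_div]
      ring
    have hT : HasDerivAt (fun τ => Gmp s s₁ τ)
        (lam / Real.sqrt (Dm * Dp) *
          (Dm * HXX Erfc Dm (lam * α) (-s + s₁ * Real.sqrt (Dm / Dp)) t)) t := by
      simp only [hre]
      exact (hfun_t Erfc Dm (lam * α) hE hDm (-s + s₁ * Real.sqrt (Dm / Dp)) t ht).const_mul _
    have hd1 : deriv (fun σ => Gmp σ s₁ t) = fun σ =>
        lam / Real.sqrt (Dm * Dp) *
          (HX Erfc Dm (lam * α) (-σ + s₁ * Real.sqrt (Dm / Dp)) t * (-1)) := by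
      funext σ
      have hin : HasDerivAt (fun σ' : ℝ => -σ' + s₁ * Real.sqrt (Dm / Dp)) (-1) σ := by
        simpa using ((hasDerivAt_id σ).neg).add_const (s₁ * Real.sqrt (Dm / Dp))
      have e : HasDerivAt (fun σ' : ℝ =>
          Real.exp (lam * α * (-σ' + s₁ * Real.sqrt (Dm / Dp)) / Real.sqrt Dm +
            (lam * α) ^ 2 * t) *
            Erfc ((-σ' + s₁ * Real.sqrt (Dm / Dp)) / (2 * Real.sqrt (Dm * t)) +
              lam * α * Real.sqrt t))
          (HX Erfc Dm (lam * α) (-σ + s₁ * Real.sqrt (Dm / Dp)) t * (-1)) σ := by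
        have := (hfun_x Erfc Dm (lam * α) hE hDm t ht
          (-σ + s₁ * Real.sqrt (Dm / Dp))).comp σ hin
        simpa [Function.comp_def] using this
      simp only [hre]
      exact (e.const_mul _).deriv
    have hXX1 : HasDerivAt (fun σ => lam / Real.sqrt (Dm * Dp) *
        (HX Erfc Dm (lam * α) (-σ + s₁ * Real.sqrt (Dm / Dp)) t * (-1)))
        (lam / Real.sqrt (Dm * Dp) *
          ((HXX Erfc Dm (lam * α) (-s + s₁ * Real.sqrt (Dm / Dp)) t * (-1)) * (-1))) s := by
      have hin : HasDerivAt (fun σ' : ℝ => -σ' + s₁ * Real.sqrt (Dm / Dp)) (-1) s := by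
        simpa using ((hasDerivAt_id s).neg).add_const (s₁ * Real.sqrt (Dm / Dp))
      have g : HasDerivAt (fun σ : ℝ => HX Erfc Dm (lam * α) (-σ + s₁ * Real.sqrt (Dm / Dp)) t)
          (HXX Erfc Dm (lam * α) (-s + s₁ * Real.sqrt (Dm / Dp)) t * (-1)) s := by
        have := (hfun_xx Erfc Dm (lam * α) hE hDm t ht
          (-s + s₁ * Real.sqrt (Dm / Dp))).comp s hin
        simpa [Function.comp_def] using this
      exact (g.mul_const (-1)).const_mul _
    rw [hT.deriv, hd1, hXX1.deriv]
    ring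
end

section
/- Let D₊, D₋ > 0, α = 1/√D₋ + 1/√D₊, A = (√D₊ − √D₋)/(√D₊ + √D₋), B = √D₊/(√D₊ + √D₋), Erfc(x) = (2/√π)∫_x^∞ e^{−u²} du. For λ > 0 define G₊₊(s,s₁,t;λ) = (4πD₊t)^{-1/2}[exp(−(s−s₁)²/(4D₊t)) + exp(−(s+s₁)²/(4D₊t))] − (λ/D₊)·exp(λα(s+s₁)/√D₊ + λ²α²t)·Erfc((s+s₁)/(2√(D₊t)) + λα√t), and define Γ₊₊(s,s₁,t) = (4πD₊t)^{-1/2}[exp(−(s−s₁)²/(4D₊t)) + A·exp(−(s+s₁)²/(4D₊t))]. Then for every fixed t > 0 and fixed s, s₁ ≥ 0 with s + s₁ > 0: lim_{λ→∞} G₊₊(s, s₁, t; λ) = Γ₊₊(s, s₁, t). -/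
open MeasureTheory Set Filter

private lemma expNegSq_integrableOn (x : ℝ) :
    IntegrableOn (fun u : ℝ => Real.exp (-u ^ 2)) (Ioi x) := by
  have h := integrable_exp_neg_mul_sq (b := (1 : ℝ)) one_pos
  have h' : Integrable (fun u : ℝ => Real.exp (-u ^ 2)) := by
    simpa [neg_mul, one_mul] using h
  exact h'.integrableOn

private lemma hasDerivAt_aux1 (u : ℝ) :
    HasDerivAt (fun u : ℝ => -Real.exp (-u ^ 2) / 2) (u * Real.exp (-u ^ 2)) u := by
  have h1 : HasDerivAt (fun u : ℝ => -u ^ 2) (-(2 * u)) u := by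
    simpa using (hasDerivAt_pow 2 u).fun_neg
  have h2 := h1.exp
  have h3 := (h2.fun_neg).div_const 2
  refine h3.congr_deriv ?_
  ring

private lemma int_u_exp (x : ℝ) (hx : 0 < x) :
    ∫ u in Ioi x, u * Real.exp (-u ^ 2) = Real.exp (-x ^ 2) / 2 := by
  have hderiv : ∀ u ∈ Ici x, HasDerivAt (fun u : ℝ => -Real.exp (-u ^ 2) / 2)
      (u * Real.exp (-u ^ 2)) u := fun u _ => hasDerivAt_aux1 u
  have hpos : ∀ u ∈ Ioi x, 0 ≤ u * Real.exp (-u ^ 2) := fun u hu =>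
    mul_nonneg (le_of_lt (hx.trans hu)) (Real.exp_pos _).le
  have htend : Tendsto (fun u : ℝ => -Real.exp (-u ^ 2) / 2) atTop (nhds 0) := by
    have h1 : Tendsto (fun u : ℝ => -u ^ 2) atTop atBot :=
      tendsto_neg_atTop_atBot.comp (tendsto_pow_atTop two_ne_zero)
    have h2 : Tendsto (fun u : ℝ => Real.exp (-u ^ 2)) atTop (nhds 0) :=
      Real.tendsto_exp_atBot.comp h1
    simpa using (h2.neg).div_const 2
  rw [integral_Ioi_of_hasDerivAt_of_nonneg' hderiv hpos htend]
  ring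

private lemma intOn_u_exp (x : ℝ) (hx : 0 < x) :
    IntegrableOn (fun u : ℝ => u * Real.exp (-u ^ 2)) (Ioi x) := by
  refine integrableOn_Ioi_deriv_of_nonneg' (l := 0) (g := fun u : ℝ => -Real.exp (-u ^ 2) / 2)
    (fun u _ => hasDerivAt_aux1 u) (fun u hu =>
      mul_nonneg (le_of_lt (hx.trans hu)) (Real.exp_pos _).le) ?_
  have h1 : Tendsto (fun u : ℝ => -u ^ 2) atTop atBot :=
    tendsto_neg_atTop_atBot.comp (tendsto_pow_atTop two_ne_zero)
  have h2 : Tendsto (fun u : ℝ => Real.exp (-u ^ 2)) atTop (nhds 0) :=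
    Real.tendsto_exp_atBot.comp h1
  simpa using (h2.neg).div_const 2

private lemma hasDerivAt_aux2 (u : ℝ) (hu : u ≠ 0) :
    HasDerivAt (fun u : ℝ => -Real.exp (-u ^ 2) / (2 * u))
      (Real.exp (-u ^ 2) + Real.exp (-u ^ 2) / (2 * u ^ 2)) u := by
  have h1 : HasDerivAt (fun u : ℝ => -u ^ 2) (-(2 * u)) u := by
    simpa using (hasDerivAt_pow 2 u).fun_neg
  have h2 := (h1.exp).fun_neg
  have h3 : HasDerivAt (fun u : ℝ => 2 * u) 2 u := by
    simpa using (hasDerivAt_id u).const_mul (2 : ℝ)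
  have h4 := h2.fun_div h3 (by simpa using hu)
  refine h4.congr_deriv ?_
  field_simp
  ring

private lemma int_g_exp (x : ℝ) (hx : 0 < x) :
    ∫ u in Ioi x, (Real.exp (-u ^ 2) + Real.exp (-u ^ 2) / (2 * u ^ 2))
      = Real.exp (-x ^ 2) / (2 * x) := by
  have hderiv : ∀ u ∈ Ici x, HasDerivAt (fun u : ℝ => -Real.exp (-u ^ 2) / (2 * u))
      (Real.exp (-u ^ 2) + Real.exp (-u ^ 2) / (2 * u ^ 2)) u := fun u hu =>
    hasDerivAt_aux2 u (ne_of_gt (lt_of_lt_of_le hx hu))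
  have hpos : ∀ u ∈ Ioi x, 0 ≤ Real.exp (-u ^ 2) + Real.exp (-u ^ 2) / (2 * u ^ 2) := by
    intro u hu
    have h1 : (0:ℝ) < u := hx.trans hu
    positivity
  have htend : Tendsto (fun u : ℝ => -Real.exp (-u ^ 2) / (2 * u)) atTop (nhds 0) := by
    have h1 : Tendsto (fun u : ℝ => -u ^ 2) atTop atBot :=
      tendsto_neg_atTop_atBot.comp (tendsto_pow_atTop two_ne_zero)
    have h2 : Tendsto (fun u : ℝ => Real.exp (-u ^ 2)) atTop (nhds 0) :=
      Real.tendsto_exp_atBot.comp h1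
    have h3 : Tendsto (fun u : ℝ => (2 * u)⁻¹) atTop (nhds 0) :=
      Tendsto.inv_tendsto_atTop (tendsto_id.const_mul_atTop (by norm_num : (0:ℝ) < 2))
    have := (h2.neg).mul h3
    simpa [div_eq_mul_inv] using this
  rw [integral_Ioi_of_hasDerivAt_of_nonneg' hderiv hpos htend]
  ring

private lemma intOn_g_exp (x : ℝ) (hx : 0 < x) :
    IntegrableOn (fun u : ℝ => Real.exp (-u ^ 2) + Real.exp (-u ^ 2) / (2 * u ^ 2)) (Ioi x) := by
  refine integrableOn_Ioi_deriv_of_nonneg' (l := 0)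
    (g := fun u : ℝ => -Real.exp (-u ^ 2) / (2 * u))
    (fun u hu => hasDerivAt_aux2 u (ne_of_gt (lt_of_lt_of_le hx hu)))
    (fun u hu => by
      have h1 : (0:ℝ) < u := hx.trans hu
      positivity) ?_
  have h1 : Tendsto (fun u : ℝ => -u ^ 2) atTop atBot :=
    tendsto_neg_atTop_atBot.comp (tendsto_pow_atTop two_ne_zero)
  have h2 : Tendsto (fun u : ℝ => Real.exp (-u ^ 2)) atTop (nhds 0) :=
    Real.tendsto_exp_atBot.comp h1
  have h3 : Tendsto (fun u : ℝ => (2 * u)⁻¹) atTop (nhds 0) :=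
    Tendsto.inv_tendsto_atTop (tendsto_id.const_mul_atTop (by norm_num : (0:ℝ) < 2))
  have := (h2.neg).mul h3
  simpa [div_eq_mul_inv] using this

private lemma erfInt_upper (x : ℝ) (hx : 0 < x) :
    (∫ u in Ioi x, Real.exp (-u ^ 2)) ≤ Real.exp (-x ^ 2) / (2 * x) := by
  have hmono : (∫ u in Ioi x, Real.exp (-u ^ 2)) ≤ ∫ u in Ioi x, x⁻¹ * (u * Real.exp (-u ^ 2)) := by
    refine setIntegral_mono_on (expNegSq_integrableOn x)
      ((intOn_u_exp x hx).const_mul _) measurableSet_Ioi ?_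
    intro u hu
    have h1 : (0:ℝ) < u := hx.trans hu
    have h2 : (1:ℝ) ≤ x⁻¹ * u := by
      rw [inv_mul_eq_div, le_div_iff₀ hx]
      linarith [hu.out]
    calc Real.exp (-u ^ 2) = 1 * Real.exp (-u ^ 2) := by ring
    _ ≤ (x⁻¹ * u) * Real.exp (-u ^ 2) := mul_le_mul_of_nonneg_right h2 (Real.exp_pos _).le
    _ = x⁻¹ * (u * Real.exp (-u ^ 2)) := by ring
  rw [integral_const_mul, int_u_exp x hx] at hmono
  calc (∫ u in Ioi x, Real.exp (-u ^ 2)) ≤ x⁻¹ * (Real.exp (-x ^ 2) / 2) := hmono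
  _ = Real.exp (-x ^ 2) / (2 * x) := by field_simp

private lemma erfInt_lower (x : ℝ) (hx : 0 < x) :
    x * Real.exp (-x ^ 2) / (2 * x ^ 2 + 1) ≤ ∫ u in Ioi x, Real.exp (-u ^ 2) := by
  set I := ∫ u in Ioi x, Real.exp (-u ^ 2) with hI
  have hInn : 0 ≤ I := setIntegral_nonneg measurableSet_Ioi (fun u _ => (Real.exp_pos _).le)
  have hsplit : (∫ u in Ioi x, (Real.exp (-u ^ 2) + Real.exp (-u ^ 2) / (2 * u ^ 2)))
      = I + ∫ u in Ioi x, Real.exp (-u ^ 2) / (2 * u ^ 2) := by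
    have hint2 : IntegrableOn (fun u : ℝ => Real.exp (-u ^ 2) / (2 * u ^ 2)) (Ioi x) :=
      ((intOn_g_exp x hx).sub (expNegSq_integrableOn x)).congr
        (ae_of_all _ fun u => by simp [Pi.sub_apply])
    rw [integral_add (expNegSq_integrableOn x) hint2]
  have hbound : (∫ u in Ioi x, Real.exp (-u ^ 2) / (2 * u ^ 2))
      ≤ (2 * x ^ 2)⁻¹ * I := by
    rw [hI, ← integral_const_mul]
    refine setIntegral_mono_on
      (((intOn_g_exp x hx).sub (expNegSq_integrableOn x)).congr
        (ae_of_all _ fun u => by simp [Pi.sub_apply]))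
      ((expNegSq_integrableOn x).const_mul _) measurableSet_Ioi ?_
    intro u hu
    have h1 : (0:ℝ) < u := hx.trans hu
    have h2 : (2 * x ^ 2) ≤ 2 * u ^ 2 := by nlinarith [le_of_lt hu.out]
    rw [div_eq_mul_inv, mul_comm]
    exact mul_le_mul_of_nonneg_right
      (inv_anti₀ (by positivity) h2) (Real.exp_pos _).le
  have hkey : Real.exp (-x ^ 2) / (2 * x) ≤ I + (2 * x ^ 2)⁻¹ * I := by
    rw [← int_g_exp x hx, hsplit]
    linarith
  have hx2 : (0:ℝ) < 2 * x ^ 2 := by positivity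
  rw [div_le_iff₀ (by positivity : (0:ℝ) < 2 * x)] at hkey
  rw [div_le_iff₀ (by positivity : (0:ℝ) < 2 * x ^ 2 + 1)]
  have hexp : (0:ℝ) < Real.exp (-x ^ 2) := Real.exp_pos _
  nlinarith [hkey, hInn, hexp, sq_nonneg x, mul_inv_cancel₀ (ne_of_gt hx2), hx]

private lemma key_limit :
    Tendsto (fun x : ℝ => x * Real.exp (x ^ 2) * ∫ u in Ioi x, Real.exp (-u ^ 2))
      atTop (nhds (1 / 2)) := by
  have hlow : Tendsto (fun x : ℝ => x ^ 2 / (2 * x ^ 2 + 1)) atTop (nhds (1 / 2)) := by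
    have h1 : Tendsto (fun x : ℝ => 2 + (x ^ 2)⁻¹) atTop (nhds 2) := by
      have := Tendsto.inv_tendsto_atTop (tendsto_pow_atTop (two_ne_zero) : Tendsto (fun x : ℝ => x ^ 2) atTop atTop)
      simpa using tendsto_const_nhds.add this
    have h2 := h1.inv₀ (by norm_num : (2:ℝ) ≠ 0)
    have h3 : Tendsto (fun x : ℝ => (2 + (x ^ 2)⁻¹)⁻¹) atTop (nhds (1/2)) := by
      convert h2 using 2; norm_num
    refine h3.congr' ?_
    filter_upwards [eventually_gt_atTop (0:ℝ)] with x hx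
    have hx2 : x ^ 2 ≠ 0 := by positivity
    field_simp
  refine tendsto_of_tendsto_of_tendsto_of_le_of_le' hlow tendsto_const_nhds ?_ ?_
  · filter_upwards [eventually_gt_atTop (0:ℝ)] with x hx
    have h1 := erfInt_lower x hx
    have hpos : (0:ℝ) < x * Real.exp (x ^ 2) := by positivity
    have hee : Real.exp (x ^ 2) * Real.exp (-x ^ 2) = 1 := by
      rw [← Real.exp_add]; simp
    calc x ^ 2 / (2 * x ^ 2 + 1)
        = x * Real.exp (x ^ 2) * (x * Real.exp (-x ^ 2) / (2 * x ^ 2 + 1)) := by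
          rw [show x * Real.exp (x ^ 2) * (x * Real.exp (-x ^ 2) / (2 * x ^ 2 + 1))
              = Real.exp (x ^ 2) * Real.exp (-x ^ 2) * (x ^ 2 / (2 * x ^ 2 + 1)) by ring,
            hee, one_mul]
      _ ≤ x * Real.exp (x ^ 2) * ∫ u in Ioi x, Real.exp (-u ^ 2) :=
          mul_le_mul_of_nonneg_left h1 hpos.le
  · filter_upwards [eventually_gt_atTop (0:ℝ)] with x hx
    have h1 := erfInt_upper x hx
    have hpos : (0:ℝ) < x * Real.exp (x ^ 2) := by positivity
    calc x * Real.exp (x ^ 2) * ∫ u in Ioi x, Real.exp (-u ^ 2)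
        ≤ x * Real.exp (x ^ 2) * (Real.exp (-x ^ 2) / (2 * x)) :=
          mul_le_mul_of_nonneg_left h1 hpos.le
      _ = 1 / 2 := by
          have hee : Real.exp (x ^ 2) * Real.exp (-x ^ 2) = 1 := by
            rw [← Real.exp_add]; simp
          rw [show x * Real.exp (x ^ 2) * (Real.exp (-x ^ 2) / (2 * x))
              = Real.exp (x ^ 2) * Real.exp (-x ^ 2) * (x / (2 * x)) by ring,
            hee, one_mul]
          rw [div_eq_iff (by positivity : (2:ℝ) * x ≠ 0)]
          ring

private lemma scalar_id (p m τ q E D : ℝ) (hp : 0 < p) (hm : 0 < m) (hτ : 0 < τ)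
    (hq : 0 < q) (hD : p ^ 2 = D) :
    E / D * (((1 / m + 1 / p) * τ)⁻¹ * (2 / q * (1 / 2)))
      = (2 * q * p * τ)⁻¹ * (1 - (p - m) / (p + m)) * E := by
  subst hD
  have hpm : p + m ≠ 0 := by positivity
  field_simp
  ring

/-- As the interface resistance coefficient `λ` tends to `∞`, the 'same side' component
`G₊₊(s, s₁, t; λ)` of the finite-`λ` transmission Green function converges to the
corresponding component `Γ₊₊(s, s₁, t)` of the perfect-contact (`λ = ∞`) Green function,
for fixed `t > 0` and fixed `s, s₁ ≥ 0` with `s + s₁ > 0`. -/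
theorem green_function_tendsto_lambda_infty
    (Dp Dm α A : ℝ) (hDp : 0 < Dp) (hDm : 0 < Dm)
    (hα : α = 1 / Real.sqrt Dm + 1 / Real.sqrt Dp)
    (hA : A = (Real.sqrt Dp - Real.sqrt Dm) / (Real.sqrt Dp + Real.sqrt Dm))
    (Erfc : ℝ → ℝ)
    (hErfc : ∀ x, Erfc x = (2 / Real.sqrt Real.pi) * ∫ u in Set.Ioi x, Real.exp (-u ^ 2))
    (s s₁ t : ℝ) (hs : 0 ≤ s) (hs₁ : 0 ≤ s₁) (hss₁ : 0 < s + s₁) (ht : 0 < t) :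
    Tendsto (fun lam : ℝ =>
        (4 * Real.pi * Dp * t) ^ (-(1 : ℝ) / 2) *
          (Real.exp (-(s - s₁) ^ 2 / (4 * Dp * t)) + Real.exp (-(s + s₁) ^ 2 / (4 * Dp * t))) -
        (lam / Dp) * Real.exp (lam * α * (s + s₁) / Real.sqrt Dp + lam ^ 2 * α ^ 2 * t) *
          Erfc ((s + s₁) / (2 * Real.sqrt (Dp * t)) + lam * α * Real.sqrt t))
      atTop
      (nhds ((4 * Real.pi * Dp * t) ^ (-(1 : ℝ) / 2) *
        (Real.exp (-(s - s₁) ^ 2 / (4 * Dp * t)) +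
          A * Real.exp (-(s + s₁) ^ 2 / (4 * Dp * t))))) := by
  have hp : 0 < Real.sqrt Dp := Real.sqrt_pos.mpr hDp
  have hm : 0 < Real.sqrt Dm := Real.sqrt_pos.mpr hDm
  have hq : 0 < Real.sqrt Real.pi := Real.sqrt_pos.mpr Real.pi_pos
  have hτ : 0 < Real.sqrt t := Real.sqrt_pos.mpr ht
  have hp2 : Real.sqrt Dp ^ 2 = Dp := Real.sq_sqrt hDp.le
  have hq2 : Real.sqrt Real.pi ^ 2 = Real.pi := Real.sq_sqrt Real.pi_pos.le
  have hτ2 : Real.sqrt t ^ 2 = t := Real.sq_sqrt ht.le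
  have hαpos : 0 < α := by rw [hα]; positivity
  set c := s + s₁ with hc_def
  have hDpt : 0 < Real.sqrt (Dp * t) := Real.sqrt_pos.mpr (by positivity)
  set b := c / (2 * Real.sqrt (Dp * t)) with hb_def
  have hbpos : 0 < b := by rw [hb_def]; positivity
  set k := α * Real.sqrt t with hk_def
  have hk : 0 < k := by rw [hk_def]; positivity
  have hXpos : ∀ lam : ℝ, 0 < lam → 0 < b + lam * α * Real.sqrt t := by
    intro lam hl; positivity
  have hX : Tendsto (fun lam : ℝ => b + lam * α * Real.sqrt t) atTop atTop := by
    apply tendsto_atTop_add_const_left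
    exact (tendsto_id.atTop_mul_const (show (0:ℝ) < α * Real.sqrt t by positivity)).congr
      (fun lam => by simp only [id_eq]; ring)
  have hI : Tendsto (fun lam : ℝ => (b + lam * α * Real.sqrt t) *
      Real.exp ((b + lam * α * Real.sqrt t) ^ 2) *
      ∫ u in Ioi (b + lam * α * Real.sqrt t), Real.exp (-u ^ 2)) atTop (nhds (1 / 2)) :=
    key_limit.comp hX
  have hratio : Tendsto (fun lam : ℝ => lam / (b + lam * α * Real.sqrt t))
      atTop (nhds k⁻¹) := by
    have h1 : Tendsto (fun lam : ℝ => b / lam + k) atTop (nhds k) := by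
      have h0 : Tendsto (fun lam : ℝ => b / lam) atTop (nhds 0) :=
        tendsto_const_nhds.div_atTop tendsto_id
      simpa using h0.add (tendsto_const_nhds : Tendsto (fun _ : ℝ => k) atTop (nhds k))
    refine (h1.inv₀ (ne_of_gt hk)).congr' ?_
    filter_upwards [eventually_gt_atTop (0:ℝ)] with lam hl
    have hXl := hXpos lam hl
    have hlam : lam ≠ 0 := ne_of_gt hl
    rw [hk_def, show lam / (b + lam * α * Real.sqrt t)
        = ((b + lam * α * Real.sqrt t) / lam)⁻¹ by rw [inv_div], inv_inj]
    field_simp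
  have h2b : 2 * b * Real.sqrt t = c / Real.sqrt Dp := by
    rw [hb_def, Real.sqrt_mul hDp.le]
    field_simp
  have hEexp : ∀ lam : ℝ, Real.exp (lam * α * c / Real.sqrt Dp + lam ^ 2 * α ^ 2 * t)
      = Real.exp (-b ^ 2) * Real.exp ((b + lam * α * Real.sqrt t) ^ 2) := by
    intro lam
    rw [← Real.exp_add]
    congr 1
    have h' : lam * α * c / Real.sqrt Dp = lam * α * (2 * b * Real.sqrt t) := by
      rw [h2b]; ring
    rw [h', show (b + lam * α * Real.sqrt t) ^ 2
        = b ^ 2 + lam * α * (2 * b * Real.sqrt t) + lam ^ 2 * α ^ 2 * Real.sqrt t ^ 2 by ring,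
      hτ2]
    ring
  have hT : Tendsto (fun lam : ℝ => lam / Dp *
      Real.exp (lam * α * c / Real.sqrt Dp + lam ^ 2 * α ^ 2 * t) *
      Erfc (b + lam * α * Real.sqrt t)) atTop
      (nhds (Real.exp (-b ^ 2) / Dp * (k⁻¹ * (2 / Real.sqrt Real.pi * (1 / 2))))) := by
    have h0 := (hratio.mul (hI.const_mul (2 / Real.sqrt Real.pi))).const_mul
      (Real.exp (-b ^ 2) / Dp)
    refine h0.congr' ?_
    filter_upwards [eventually_gt_atTop (0:ℝ)] with lam hl
    have hXl := hXpos lam hl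
    rw [hErfc, hEexp lam]
    field_simp
  have he2 : Real.exp (-b ^ 2) = Real.exp (-c ^ 2 / (4 * Dp * t)) := by
    congr 1
    rw [hb_def, div_pow, mul_pow, Real.sq_sqrt (by positivity : (0:ℝ) ≤ Dp * t)]
    rw [neg_div]
    norm_num
    ring_nf
  have hpm : Real.sqrt Dp + Real.sqrt Dm ≠ 0 := by positivity
  have h4 : Real.sqrt (4 * Real.pi * Dp * t)
      = 2 * Real.sqrt Real.pi * Real.sqrt Dp * Real.sqrt t := by
    have h' : (2 * Real.sqrt Real.pi * Real.sqrt Dp * Real.sqrt t) ^ 2 = 4 * Real.pi * Dp * t := by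
      rw [show (2 * Real.sqrt Real.pi * Real.sqrt Dp * Real.sqrt t) ^ 2
          = 4 * Real.sqrt Real.pi ^ 2 * Real.sqrt Dp ^ 2 * Real.sqrt t ^ 2 by ring,
        hq2, hp2, hτ2]
    rw [← h', Real.sqrt_sq (by positivity)]
  have hC : (4 * Real.pi * Dp * t) ^ (-(1 : ℝ) / 2)
      = (2 * Real.sqrt Real.pi * Real.sqrt Dp * Real.sqrt t)⁻¹ := by
    rw [show (-(1 : ℝ) / 2) = -(1 / 2) by norm_num,
      Real.rpow_neg (by positivity : (0:ℝ) ≤ 4 * Real.pi * Dp * t),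
      ← Real.sqrt_eq_rpow, h4]
  have hscalar : Real.exp (-c ^ 2 / (4 * Dp * t)) / Dp *
      (k⁻¹ * (2 / Real.sqrt Real.pi * (1 / 2)))
      = (4 * Real.pi * Dp * t) ^ (-(1 : ℝ) / 2) * (1 - A) *
        Real.exp (-c ^ 2 / (4 * Dp * t)) := by
    rw [hC, hA, hk_def, hα]
    exact scalar_id _ _ _ _ _ _ hp hm hτ hq hp2
  have hpoint : (4 * Real.pi * Dp * t) ^ (-(1 : ℝ) / 2) *
      (Real.exp (-(s - s₁) ^ 2 / (4 * Dp * t)) + A * Real.exp (-c ^ 2 / (4 * Dp * t)))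
      = (4 * Real.pi * Dp * t) ^ (-(1 : ℝ) / 2) *
        (Real.exp (-(s - s₁) ^ 2 / (4 * Dp * t)) + Real.exp (-c ^ 2 / (4 * Dp * t)))
        - Real.exp (-b ^ 2) / Dp * (k⁻¹ * (2 / Real.sqrt Real.pi * (1 / 2))) := by
    rw [he2, hscalar]; ring
  rw [hpoint]
  exact tendsto_const_nhds.sub hT
end

section
/- Let D₊, D₋ > 0, B = √D₊/(√D₊ + √D₋), and Γ₋₊(s,s₁,t) = B·(πD₊t)^{-1/2}·exp(−(s − s₁√(D₋/D₊))²/(4D₋t)). Then for all t > 0 the total heat transmitted through a perfectly conducting flat interface is exactly ∫_{−∞}^0 ∫_0^∞ Γ₋₊(s, s₁, t) ds₁ ds = (2/√π) · (√(D₊D₋)/(√D₊ + √D₋)) · √t. -/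
open MeasureTheory Set Real Filter

private lemma integral_shift_aux (h : ℝ → ℝ) (s : ℝ) :
    (∫ y in Ioi (0:ℝ), h (y - s)) = ∫ x in Ioi (-s), h x := by
  rw [← integral_indicator measurableSet_Ioi, ← integral_indicator measurableSet_Ioi,
    ← integral_sub_right_eq_self ((Ioi (-s)).indicator h) s]
  congr 1
  ext y
  rcases lt_or_ge 0 y with hy | hy
  · rw [indicator_of_mem (mem_Ioi.2 hy), indicator_of_mem (by simp only [mem_Ioi]; linarith)]
  · rw [indicator_of_notMem (by simpa using hy),
      indicator_of_notMem (by simp only [mem_Ioi, not_lt]; linarith)]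

private lemma integral_x_exp_aux {b : ℝ} (hb : 0 < b) :
    (∫ x in Ioi (0:ℝ), x * Real.exp (-b * x ^ 2)) = (2 * b)⁻¹ := by
  have hderiv : ∀ x ∈ Ici (0:ℝ),
      HasDerivAt (fun x => -(2*b)⁻¹ * Real.exp (-b * x^2)) (x * Real.exp (-b * x^2)) x := by
    intro x _
    have h1 : HasDerivAt (fun x : ℝ => -b * x^2) (-b * (2*x)) x := by
      simpa using (hasDerivAt_pow 2 x).const_mul (-b)
    have := h1.exp.const_mul (-(2*b)⁻¹)
    refine this.congr_deriv ?_
    field_simp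
  have htend : Tendsto (fun x : ℝ => -(2*b)⁻¹ * Real.exp (-b * x^2)) atTop (nhds 0) := by
    have h1 : Tendsto (fun x : ℝ => b * x^2) atTop atTop :=
      (tendsto_pow_atTop (two_ne_zero)).const_mul_atTop hb
    have h2 : Tendsto (fun x : ℝ => -b * x^2) atTop atBot := by
      have : Tendsto (fun x : ℝ => -(b * x^2)) atTop atBot := tendsto_neg_atTop_atBot.comp h1
      simpa [neg_mul] using this
    have h3 : Tendsto (fun x : ℝ => Real.exp (-b * x^2)) atTop (nhds 0) :=
      Real.tendsto_exp_atBot.comp h2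
    simpa using h3.const_mul (-(2*b)⁻¹)
  have := integral_Ioi_of_hasDerivAt_of_tendsto' hderiv
    (integrable_mul_exp_neg_mul_sq hb).integrableOn htend
  simpa using this


private lemma slice_aux {b : ℝ} (x : ℝ) (hx : 0 < x) :
    (∫ w in Ioi (0:ℝ), (Iio x).indicator (fun _ => Real.exp (-b * x^2)) w)
      = x * Real.exp (-b * x^2) := by
  rw [integral_indicator measurableSet_Iio, Measure.restrict_restrict measurableSet_Iio,
    Iio_inter_Ioi, setIntegral_const, Real.volume_real_Ioo_of_le hx.le, smul_eq_mul]
  ring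

private lemma double_tail_aux {b : ℝ} (hb : 0 < b) :
    (∫ w in Ioi (0:ℝ), ∫ x in Ioi w, Real.exp (-b * x ^ 2)) = (2 * b)⁻¹ := by
  set f : ℝ → ℝ := fun x => Real.exp (-b * x ^ 2) with hf
  set F : ℝ → ℝ → ℝ := fun w x => (Ioi w).indicator f x with hF
  have hFwx : ∀ w x, F w x = (Iio x).indicator (fun _ => f x) w := by
    intro w x
    by_cases h : w < x
    · rw [hF]; simp [indicator_of_mem (mem_Ioi.2 h), indicator_of_mem (mem_Iio.2 h)]
    · rw [hF]; simp [indicator_of_notMem (by simpa using h : x ∉ Ioi w),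
        indicator_of_notMem (by simpa using h : w ∉ Iio x)]
  -- measurability of uncurry F
  have hSm : MeasurableSet {p : ℝ × ℝ | p.1 < p.2} := measurableSet_lt measurable_fst measurable_snd
  have hFm : AEStronglyMeasurable (Function.uncurry F)
      ((volume.restrict (Ioi (0:ℝ))).prod (volume.restrict (Ioi (0:ℝ)))) := by
    have : Function.uncurry F = {p : ℝ × ℝ | p.1 < p.2}.indicator (fun p => f p.2) := by
      ext ⟨w, x⟩
      by_cases h : w < x
      · simp [Function.uncurry, hF, indicator_of_mem, mem_Ioi.2 h, h]
      · simp [Function.uncurry, hF, h, indicator_of_notMem, mem_Ioi, not_lt.1 h]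
    rw [this]
    exact (((measurable_snd.pow_const 2).const_mul (-b)).exp.indicator hSm).aestronglyMeasurable
  -- the slice in x direction equals x * f x a.e.
  have hslice : ∀ᵐ x ∂(volume.restrict (Ioi (0:ℝ))),
      (∫ w in Ioi (0:ℝ), F w x) = x * f x := by
    filter_upwards [ae_restrict_mem measurableSet_Ioi] with x hx
    simp only [hFwx]
    exact slice_aux x hx
  -- integrability on the product
  have hInt : Integrable (Function.uncurry F)
      ((volume.restrict (Ioi (0:ℝ))).prod (volume.restrict (Ioi (0:ℝ)))) := by
    rw [integrable_prod_iff' hFm]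
    constructor
    · filter_upwards [ae_restrict_mem measurableSet_Ioi] with x _
      simp only [Function.uncurry]
      have : (fun w => F w x) = (Iio x).indicator (fun _ => f x) := by
        ext w; exact hFwx w x
      rw [this, integrable_indicator_iff measurableSet_Iio]
      refine integrableOn_const (ne_of_lt ?_)
      rw [Measure.restrict_apply measurableSet_Iio, Iio_inter_Ioi, Real.volume_Ioo]
      exact ENNReal.ofReal_lt_top
    · have : ∀ᵐ x ∂(volume.restrict (Ioi (0:ℝ))),
          (∫ w in Ioi (0:ℝ), ‖Function.uncurry F (w, x)‖) = x * f x := by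
        filter_upwards [hslice, ae_restrict_mem measurableSet_Ioi] with x hx hx0
        rw [← hx]
        congr 1
        ext w
        simp only [Function.uncurry, hF, Real.norm_eq_abs]
        rw [abs_of_nonneg]
        exact indicator_nonneg (fun y _ => (Real.exp_pos _).le) _
      refine (integrable_congr ?_).2 ((integrable_mul_exp_neg_mul_sq hb).integrableOn)
      filter_upwards [this] with x hx
      exact hx
  -- inner integrals over Ioi w, for w > 0
  have hinner : ∀ᵐ w ∂(volume.restrict (Ioi (0:ℝ))),
      (∫ x in Ioi w, f x) = ∫ x in Ioi (0:ℝ), F w x := by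
    filter_upwards [ae_restrict_mem measurableSet_Ioi] with w hw
    rw [hF]
    simp only
    rw [integral_indicator measurableSet_Ioi, Measure.restrict_restrict measurableSet_Ioi,
      Ioi_inter_Ioi, max_eq_left (le_of_lt hw)]
  calc (∫ w in Ioi (0:ℝ), ∫ x in Ioi w, f x)
      = ∫ w in Ioi (0:ℝ), ∫ x in Ioi (0:ℝ), F w x := integral_congr_ae hinner
    _ = ∫ x in Ioi (0:ℝ), ∫ w in Ioi (0:ℝ), F w x := integral_integral_swap hInt
    _ = ∫ x in Ioi (0:ℝ), x * f x := integral_congr_ae hslice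
    _ = (2 * b)⁻¹ := by
        exact integral_x_exp_aux hb
/-- The total heat transmitted through a perfectly conducting flat interface (`λ = ∞`) is
exactly `(2/√π) · (√(D₊D₋)/(√D₊ + √D₋)) · √t`. -/
theorem transmitted_heat_lambda_infty_sqrt_t_law
    (Dp Dm B : ℝ) (hDp : 0 < Dp) (hDm : 0 < Dm)
    (hB : B = Real.sqrt Dp / (Real.sqrt Dp + Real.sqrt Dm))
    (Γmp : ℝ → ℝ → ℝ → ℝ)
    (hΓmp : ∀ s s₁ t, Γmp s s₁ t = B * (Real.pi * Dp * t) ^ (-(1 : ℝ) / 2) *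
        Real.exp (-(s - s₁ * Real.sqrt (Dm / Dp)) ^ 2 / (4 * Dm * t))) :
    ∀ t : ℝ, 0 < t →
      (∫ s in Set.Iio (0 : ℝ), ∫ s₁ in Set.Ioi (0 : ℝ), Γmp s s₁ t) =
        2 / Real.sqrt Real.pi * (Real.sqrt (Dp * Dm) / (Real.sqrt Dp + Real.sqrt Dm)) *
          Real.sqrt t := by
  intro t ht
  have hsp : 0 < Real.sqrt Dp := Real.sqrt_pos.2 hDp
  have hsm : 0 < Real.sqrt Dm := Real.sqrt_pos.2 hDm
  have hst : 0 < Real.sqrt t := Real.sqrt_pos.2 ht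
  have hsπ : 0 < Real.sqrt Real.pi := Real.sqrt_pos.2 Real.pi_pos
  set c : ℝ := Real.sqrt (Dm / Dp) with hcdef
  have hcpos : 0 < c := Real.sqrt_pos.2 (div_pos hDm hDp)
  set b : ℝ := (4 * Dm * t)⁻¹ with hbdef
  have hb : 0 < b := inv_pos.2 (by positivity)
  set K : ℝ := B * (Real.pi * Dp * t) ^ (-(1 : ℝ) / 2) with hKdef
  set G : ℝ → ℝ := fun w => ∫ x in Ioi w, Real.exp (-b * x ^ 2) with hGdef
  have hexp : ∀ s s₁ : ℝ, Γmp s s₁ t = K * Real.exp (-b * (s₁ * c - s) ^ 2) := by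
    intro s s₁
    rw [hΓmp, hKdef]
    congr 2
    rw [hbdef]
    ring
  have hinner : ∀ s : ℝ, (∫ s₁ in Ioi (0 : ℝ), Γmp s s₁ t) = K * c⁻¹ * G (-s) := by
    intro s
    simp only [hexp]
    rw [integral_const_mul]
    have h1 := integral_comp_mul_right_Ioi
      (fun y => Real.exp (-b * (y - s) ^ 2)) 0 hcpos
    simp only [zero_mul] at h1
    rw [h1, integral_shift_aux (fun x => Real.exp (-b * x ^ 2)) s, smul_eq_mul, hGdef]
    ring
  have houter : (∫ s in Iio (0 : ℝ), ∫ s₁ in Ioi (0 : ℝ), Γmp s s₁ t)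
      = K * c⁻¹ * (2 * b)⁻¹ := by
    calc (∫ s in Iio (0 : ℝ), ∫ s₁ in Ioi (0 : ℝ), Γmp s s₁ t)
        = ∫ s in Iio (0 : ℝ), K * c⁻¹ * G (-s) := by simp only [hinner]
      _ = K * c⁻¹ * ∫ s in Iio (0 : ℝ), G (-s) := integral_const_mul _ _
      _ = K * c⁻¹ * ∫ s in Iic (0 : ℝ), G (-s) := by rw [integral_Iic_eq_integral_Iio]
      _ = K * c⁻¹ * ∫ w in Ioi (-(0 : ℝ)), G w := by rw [integral_comp_neg_Iic 0 G]
      _ = K * c⁻¹ * (2 * b)⁻¹ := by rw [neg_zero, hGdef]; rw [double_tail_aux hb]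
  rw [houter, hKdef, hbdef, hcdef, hB]
  have hπt : (0 : ℝ) ≤ Real.pi * Dp * t := by positivity
  rw [show (-(1 : ℝ) / 2) = -(1 / 2 : ℝ) by norm_num, Real.rpow_neg hπt,
    ← Real.sqrt_eq_rpow, show Real.pi * Dp * t = Real.pi * (Dp * t) by ring,
    Real.sqrt_mul Real.pi_pos.le, Real.sqrt_mul hDp.le,
    Real.sqrt_div hDm.le, Real.sqrt_mul hDp.le]
  have h1 : Real.sqrt Dp + Real.sqrt Dm ≠ 0 := by positivity
  field_simp
  linear_combination
    (-(4*Real.sqrt t^2)) * (Real.sq_sqrt hDm.le) +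
    (-(4*Dm)) *
      (Real.sq_sqrt ht.le)
end

section
/- Let D₊, D₋ > 0, λ > 0, α = 1/√D₋ + 1/√D₊, Erfc(x) = (2/√π)∫_x^∞ e^{−u²} du, and define G₊₊(s,s₁,t) = (4πD₊t)^{-1/2}[exp(−(s−s₁)²/(4D₊t)) + exp(−(s+s₁)²/(4D₊t))] − (λ/D₊)·exp(λα(s+s₁)/√D₊ + λ²α²t)·Erfc((s+s₁)/(2√(D₊t)) + λα√t). Then for all s, s₁ > 0 with s ≠ s₁, the Varadhan short-time bound holds: lim_{t→0⁺} t · ln G₊₊(s, s₁, t) = −(s − s₁)²/(4D₊). -/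
open MeasureTheory Set Filter Topology
set_option maxHeartbeats 1600000

lemma gauss_int_s19 (z : ℝ) (hz : 0 < z) :
    IntegrableOn (fun x : ℝ => x * Real.exp (-x ^ 2)) (Set.Ioi z) ∧
    ∫ x in Set.Ioi z, x * Real.exp (-x ^ 2) = Real.exp (-z ^ 2) / 2 := by
  have hderiv : ∀ x ∈ Set.Ici z, HasDerivAt (fun u : ℝ => -Real.exp (-u ^ 2) / 2)
      (x * Real.exp (-x ^ 2)) x := by
    intro x _
    have h1 : HasDerivAt (fun u : ℝ => -u ^ 2) (-(2 * x)) x := by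
      simpa using (hasDerivAt_pow 2 x).fun_neg
    have h2 := h1.exp.fun_neg.div_const 2
    refine h2.congr_deriv ?_
    ring
  have hpos : ∀ x ∈ Set.Ioi z, 0 ≤ x * Real.exp (-x ^ 2) := by
    intro x hx
    exact mul_nonneg (le_of_lt (hz.trans hx)) (Real.exp_nonneg _)
  have htend : Tendsto (fun u : ℝ => -Real.exp (-u ^ 2) / 2) atTop (𝓝 0) := by
    have h0 : Tendsto (fun u : ℝ => -u ^ 2) atTop atBot :=
      tendsto_neg_atBot_iff.mpr (tendsto_pow_atTop two_ne_zero)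
    have h1 : Tendsto (fun u : ℝ => Real.exp (-u ^ 2)) atTop (𝓝 0) :=
      Real.tendsto_exp_atBot.comp h0
    simpa using (h1.neg).div_const 2
  refine ⟨integrableOn_Ioi_deriv_of_nonneg' hderiv hpos htend, ?_⟩
  rw [integral_Ioi_of_hasDerivAt_of_nonneg' hderiv hpos htend]
  ring

lemma gauss_tail (z : ℝ) (hz : 0 < z) :
    ∫ u in Set.Ioi z, Real.exp (-u ^ 2) ≤ Real.exp (-z ^ 2) / (2 * z) := by
  obtain ⟨hint, heq⟩ := gauss_int_s19 z hz
  have h1 : ∫ u in Set.Ioi z, Real.exp (-u ^ 2)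
      ≤ ∫ u in Set.Ioi z, (1 / z) * (u * Real.exp (-u ^ 2)) := by
    apply setIntegral_mono_on
    · simpa using (integrable_exp_neg_mul_sq (b := 1) one_pos).integrableOn (s := Set.Ioi z)
    · exact hint.const_mul _
    · exact measurableSet_Ioi
    · intro u hu
      have huz : z ≤ u := le_of_lt hu
      have h1u : (1 : ℝ) ≤ u / z := (one_le_div hz).mpr huz
      calc Real.exp (-u ^ 2) = 1 * Real.exp (-u ^ 2) := by ring
        _ ≤ (u / z) * Real.exp (-u ^ 2) :=
            mul_le_mul_of_nonneg_right h1u (Real.exp_nonneg _)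
        _ = (1 / z) * (u * Real.exp (-u ^ 2)) := by ring
  rw [integral_const_mul, heq] at h1
  calc ∫ u in Set.Ioi z, Real.exp (-u ^ 2) ≤ (1 / z) * (Real.exp (-z ^ 2) / 2) := h1
    _ = Real.exp (-z ^ 2) / (2 * z) := by ring

/-- Varadhan short-time bound for the 'same side' component of the finite-`λ` transmission
Green function: `lim_{t→0⁺} t · ln G₊₊(s, s₁, t) = −(s − s₁)²/(4D₊)` for `s, s₁ > 0`,
`s ≠ s₁`. -/
theorem varadhan_bound_finite_lambda_same_side
    (Dp Dm lam α : ℝ) (hDp : 0 < Dp) (hDm : 0 < Dm) (hlam : 0 < lam)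
    (hα : α = 1 / Real.sqrt Dm + 1 / Real.sqrt Dp)
    (Erfc : ℝ → ℝ)
    (hErfc : ∀ x, Erfc x = (2 / Real.sqrt Real.pi) * ∫ u in Set.Ioi x, Real.exp (-u ^ 2))
    (Gpp : ℝ → ℝ → ℝ → ℝ)
    (hGpp : ∀ s s₁ t, Gpp s s₁ t = (4 * Real.pi * Dp * t) ^ (-(1 : ℝ) / 2) *
        (Real.exp (-(s - s₁) ^ 2 / (4 * Dp * t)) + Real.exp (-(s + s₁) ^ 2 / (4 * Dp * t))) -
        (lam / Dp) * Real.exp (lam * α * (s + s₁) / Real.sqrt Dp + lam ^ 2 * α ^ 2 * t) *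
          Erfc ((s + s₁) / (2 * Real.sqrt (Dp * t)) + lam * α * Real.sqrt t))
    (s s₁ : ℝ) (hs : 0 < s) (hs₁ : 0 < s₁) (hne : s ≠ s₁) :
    Tendsto (fun t => t * Real.log (Gpp s s₁ t)) (nhdsWithin 0 (Set.Ioi 0))
      (nhds (-(s - s₁) ^ 2 / (4 * Dp))) := by
  have hπ : 0 < Real.pi := Real.pi_pos
  set p := Real.sqrt Dp with hp_def
  have hp : 0 < p := Real.sqrt_pos.mpr hDp
  have hp2 : p ^ 2 = Dp := Real.sq_sqrt hDp.le
  have hσ : 0 < s + s₁ := by linarith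
  have hαpos : 0 < α := by rw [hα]; positivity
  have hsπ : 0 < Real.sqrt Real.pi := Real.sqrt_pos.mpr hπ
  have hsπ2 : Real.sqrt Real.pi ^ 2 = Real.pi := Real.sq_sqrt hπ.le
  set a := (s - s₁) ^ 2 with ha_def
  set A : ℝ → ℝ := fun t => (4 * Real.pi * Dp * t) ^ (-(1 : ℝ) / 2) *
    Real.exp (-a / (4 * Dp * t)) with hA_def
  set t₀ : ℝ := (s + s₁) / (4 * lam) with ht₀_def
  have ht₀ : 0 < t₀ := by positivity
  -- sandwich
  have hmem : Set.Ioo (0:ℝ) t₀ ∈ nhdsWithin (0:ℝ) (Set.Ioi 0) :=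
    Ioo_mem_nhdsGT_of_mem ⟨le_refl 0, ht₀⟩
  have hsand : ∀ᶠ t in nhdsWithin (0:ℝ) (Set.Ioi 0),
      A t ≤ Gpp s s₁ t ∧ Gpp s s₁ t ≤ 2 * A t := by
    filter_upwards [hmem] with t ht
    obtain ⟨ht1, ht2⟩ := ht
    set u := Real.sqrt t with hu_def
    have hu : 0 < u := Real.sqrt_pos.mpr ht1
    have hu2 : u ^ 2 = t := Real.sq_sqrt ht1.le
    have hsqDpt : Real.sqrt (Dp * t) = p * u := Real.sqrt_mul hDp.le t
    set x : ℝ := (s + s₁) / (2 * (p * u)) with hx_def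
    have hx : 0 < x := by positivity
    set z : ℝ := x + lam * α * u with hz_def
    have hz0 : 0 < z := by positivity
    have hxz : x ≤ z := le_add_of_nonneg_right (by positivity)
    have hrpow : (4 * Real.pi * Dp * t) ^ (-(1:ℝ) / 2)
        = 1 / (2 * Real.sqrt Real.pi * (p * u)) := by
      have hc : (0:ℝ) < 4 * Real.pi * Dp * t := by positivity
      have hsq : Real.sqrt (4 * Real.pi * Dp * t) = 2 * Real.sqrt Real.pi * (p * u) := by
        have h1 : 4 * Real.pi * Dp * t = (2 * Real.sqrt Real.pi * (p * u)) ^ 2 := by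
          linear_combination (-4 * p^2 * u^2) * hsπ2 + (-4 * Real.pi * u^2) * hp2
            + (-4 * Real.pi * Dp) * hu2
        rw [h1, Real.sqrt_sq (by positivity)]
      rw [show (-(1:ℝ)/2) = -(1/2) by norm_num, Real.rpow_neg hc.le, ← Real.sqrt_eq_rpow, hsq,
        one_div]
    -- exponent identity
    have hEz : Real.exp (lam * α * (s + s₁) / p + lam ^ 2 * α ^ 2 * t) * Real.exp (-z ^ 2)
        = Real.exp (-(s + s₁) ^ 2 / (4 * Dp * t)) := by
      rw [← Real.exp_add]
      congr 1
      rw [hz_def, hx_def, ← hu2, ← hp2]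
      field_simp
      ring
    -- Erfc bounds
    have hErfc_nonneg : 0 ≤ Erfc z := by
      rw [hErfc]
      exact mul_nonneg (by positivity) (integral_nonneg (fun v => Real.exp_nonneg _))
    have hErfc_le : Erfc z ≤ Real.exp (-z ^ 2) / (z * Real.sqrt Real.pi) := by
      rw [hErfc]
      calc (2 / Real.sqrt Real.pi) * ∫ v in Set.Ioi z, Real.exp (-v ^ 2)
          ≤ (2 / Real.sqrt Real.pi) * (Real.exp (-z ^ 2) / (2 * z)) :=
            mul_le_mul_of_nonneg_left (gauss_tail z hz0) (by positivity)
        _ = Real.exp (-z ^ 2) / (z * Real.sqrt Real.pi) := by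
            field_simp
    -- named pieces
    set B : ℝ := (4 * Real.pi * Dp * t) ^ (-(1:ℝ) / 2) *
      Real.exp (-(s + s₁) ^ 2 / (4 * Dp * t)) with hB_def
    set C : ℝ := (lam / Dp) * Real.exp (lam * α * (s + s₁) / p + lam ^ 2 * α ^ 2 * t) *
      Erfc z with hC_def
    have hGt : Gpp s s₁ t = A t + B - C := by
      rw [hGpp, hA_def, hB_def, hC_def, hsqDpt, hu_def]
      ring
    have hC0 : 0 ≤ C := by
      rw [hC_def]
      exact mul_nonneg (by positivity) hErfc_nonneg
    have hBA : B ≤ A t := by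
      rw [hB_def, hA_def]
      apply mul_le_mul_of_nonneg_left _ (by positivity)
      apply Real.exp_le_exp.mpr
      apply (div_le_div_iff_of_pos_right (by positivity)).mpr
      rw [ha_def]
      nlinarith only [mul_pos hs hs₁]
    have hCB : C ≤ B := by
      have h4 : 4 * lam * t ≤ s + s₁ := by
        rw [ht₀_def] at ht2
        have h5 := (lt_div_iff₀ (by positivity : (0:ℝ) < 4 * lam)).mp ht2
        linarith only [h5]
      have hE' : 0 < Real.exp (-(s + s₁) ^ 2 / (4 * Dp * t)) := Real.exp_pos _
      calc C ≤ (lam / Dp) * Real.exp (lam * α * (s + s₁) / p + lam ^ 2 * α ^ 2 * t) *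
            (Real.exp (-z ^ 2) / (z * Real.sqrt Real.pi)) :=
            mul_le_mul_of_nonneg_left hErfc_le (by positivity)
        _ = (lam / Dp) * Real.exp (-(s + s₁) ^ 2 / (4 * Dp * t)) / (z * Real.sqrt Real.pi) := by
            rw [← hEz]; ring
        _ ≤ (lam / Dp) * Real.exp (-(s + s₁) ^ 2 / (4 * Dp * t)) / (x * Real.sqrt Real.pi) := by
            apply div_le_div_of_nonneg_left (by positivity) (by positivity)
            exact mul_le_mul_of_nonneg_right hxz hsπ.le
        _ ≤ B := by
            rw [hB_def, hrpow]
            have key2 : 4 * lam * ((p * u) * (p * u)) ≤ (s + s₁) * Dp := by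
              have h5 : 4 * lam * t * Dp ≤ (s + s₁) * Dp :=
                mul_le_mul_of_nonneg_right h4 hDp.le
              calc 4 * lam * ((p * u) * (p * u)) = 4 * lam * t * Dp := by
                    rw [← hp2, ← hu2]; ring
                _ ≤ (s + s₁) * Dp := h5
            have hscal : lam / Dp / (x * Real.sqrt Real.pi)
                ≤ 1 / (2 * Real.sqrt Real.pi * (p * u)) := by
              have hL : lam / Dp / (x * Real.sqrt Real.pi)
                  = (2 * lam * (p * u)) / (Dp * (s + s₁) * Real.sqrt Real.pi) := by
                rw [hx_def]; field_simp
              rw [hL, div_le_div_iff₀ (by positivity) (by positivity)]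
              have h6 := mul_le_mul_of_nonneg_right key2 hsπ.le
              nlinarith only [h6]
            calc lam / Dp * Real.exp (-(s + s₁) ^ 2 / (4 * Dp * t)) / (x * Real.sqrt Real.pi)
                = (lam / Dp / (x * Real.sqrt Real.pi)) *
                  Real.exp (-(s + s₁) ^ 2 / (4 * Dp * t)) := by ring
              _ ≤ (1 / (2 * Real.sqrt Real.pi * (p * u))) *
                  Real.exp (-(s + s₁) ^ 2 / (4 * Dp * t)) :=
                  mul_le_mul_of_nonneg_right hscal hE'.le
    constructor
    · rw [hGt]; linarith only [hCB]
    · rw [hGt]; linarith only [hBA, hC0]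
  -- positivity of A
  have hApos : ∀ t : ℝ, 0 < t → 0 < A t := by
    intro t ht
    rw [hA_def]
    positivity
  -- log formula
  have hAlog : ∀ t : ℝ, 0 < t → t * Real.log (A t)
      = -(1/2) * (t * Real.log (4 * Real.pi * Dp)) - (1/2) * (t * Real.log t) - a / (4 * Dp) := by
    intro t ht
    have hc : (0:ℝ) < 4 * Real.pi * Dp * t := by positivity
    rw [hA_def]
    rw [Real.log_mul (by positivity) (Real.exp_ne_zero _), Real.log_exp,
      Real.log_rpow hc, Real.log_mul (by positivity) ht.ne']
    field_simp
    ring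
  -- limits
  have h1 : Tendsto (fun t : ℝ => t) (nhdsWithin (0:ℝ) (Set.Ioi 0)) (𝓝 0) :=
    tendsto_id.mono_left nhdsWithin_le_nhds
  have h2 : Tendsto (fun t : ℝ => t * Real.log t) (nhdsWithin (0:ℝ) (Set.Ioi 0)) (𝓝 0) := by
    have := tendsto_log_mul_rpow_nhdsGT_zero one_pos
    simp only [Real.rpow_one] at this
    simpa [mul_comm] using this
  have hTA : Tendsto (fun t : ℝ => t * Real.log (A t)) (nhdsWithin (0:ℝ) (Set.Ioi 0))
      (𝓝 (-(s - s₁) ^ 2 / (4 * Dp))) := by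
    have hT : Tendsto (fun t : ℝ => -(1/2) * (t * Real.log (4 * Real.pi * Dp))
        - (1/2) * (t * Real.log t) - a / (4 * Dp)) (nhdsWithin (0:ℝ) (Set.Ioi 0))
        (𝓝 (-(1/2) * (0 * Real.log (4 * Real.pi * Dp)) - (1/2) * 0 - a / (4 * Dp))) := by
      exact (((h1.mul_const (Real.log (4 * Real.pi * Dp))).const_mul (-(1/2))).sub
        (h2.const_mul (1/2))).sub_const (a / (4 * Dp))
    have heq : (-(1/2) * ((0:ℝ) * Real.log (4 * Real.pi * Dp)) - (1/2) * 0 - a / (4 * Dp))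
        = -(s - s₁) ^ 2 / (4 * Dp) := by
      rw [ha_def]; ring
    rw [heq] at hT
    apply hT.congr'
    filter_upwards [self_mem_nhdsWithin] with t ht
    exact (hAlog t ht).symm
  have hT2A : Tendsto (fun t : ℝ => t * Real.log (2 * A t)) (nhdsWithin (0:ℝ) (Set.Ioi 0))
      (𝓝 (-(s - s₁) ^ 2 / (4 * Dp))) := by
    have hlog2 : Tendsto (fun t : ℝ => t * Real.log 2) (nhdsWithin (0:ℝ) (Set.Ioi 0)) (𝓝 0) := by
      simpa using h1.mul_const (Real.log 2)
    have := hlog2.add hTA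
    rw [zero_add] at this
    apply this.congr'
    filter_upwards [self_mem_nhdsWithin] with t ht
    rw [Real.log_mul two_ne_zero (hApos t ht).ne']
    ring
  -- squeeze
  apply tendsto_of_tendsto_of_tendsto_of_le_of_le' hTA hT2A
  · filter_upwards [hsand, self_mem_nhdsWithin] with t hts ht
    have hA0 := hApos t ht
    exact mul_le_mul_of_nonneg_left
      (Real.log_le_log hA0 hts.1) (le_of_lt ht)
  · filter_upwards [hsand, self_mem_nhdsWithin] with t hts ht
    have hG0 : 0 < Gpp s s₁ t := lt_of_lt_of_le (hApos t ht) hts.1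
    exact mul_le_mul_of_nonneg_left
      (Real.log_le_log hG0 hts.2) (le_of_lt ht)
end
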